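/- arXiv:2303.06483 — 9 statements merged into one kernel-verified Lean document; each statement's English description precedes it below -/
import Mathlib

section
/- Let G be a simple graph with chromatic number χ(G) ≥ 3. Then G contains an immersion of the complete tripartite graph K_{1, 1, χ(G) − 2}. -/
/-- A simple graph `G` contains an *immersion* of a graph `H` if there is an injection
`f : V(H) → V(G)` and a family of pairwise edge-disjoint paths in `G`, one path for each
edge of `H`, the path corresponding to the edge `uv` having endpoints `f u` and `f v`. -/
def Immersion {V : Type*} {W : Type*} (G : SimpleGraph V) (H : SimpleGraph W) : Prop :=
  ∃ f : W → V, Function.Injective f ∧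
    ∃ P : ∀ u v : W, H.Adj u v → G.Walk (f u) (f v),
      (∀ u v (h : H.Adj u v), (P u v h).IsPath) ∧
      ∀ u v u' v' (h : H.Adj u v) (h' : H.Adj u' v'),
        s(u, v) ≠ s(u', v') → List.Disjoint (P u v h).edges (P u' v' h').edges



open SimpleGraph

lemma colorable_of_no_edge {V : Type*} {G : SimpleGraph V} (h : ∀ x y, ¬ G.Adj x y) (n : ℕ)
    (hn : 1 ≤ n) : G.Colorable n :=
  ⟨Coloring.mk (fun _ => ⟨0, hn⟩) (fun {x y} hxy => absurd hxy (h x y))⟩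

lemma exists_critical {V : Type*} [Fintype V] (n : ℕ) (hn : 1 ≤ n) :
    ∀ N (G : SimpleGraph V), G.edgeSet.ncard ≤ N → ¬ G.Colorable n →
    ∃ H, H ≤ G ∧ ¬ H.Colorable n ∧
      ∃ v w, H.Adj v w ∧ (H.deleteEdges {s(v, w)}).Colorable n := by
  intro N
  induction N with
  | zero =>
    intro G hcard hncol
    refine absurd (colorable_of_no_edge (fun x y hxy => ?_) n hn) hncol
    have hfin : G.edgeSet.Finite := Set.toFinite _
    have : G.edgeSet = ∅ := by
      have := Set.ncard_eq_zero hfin |>.mp (Nat.le_zero.mp hcard)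
      exact this
    exact absurd (this ▸ (G.mem_edgeSet.mpr hxy)) (Set.notMem_empty _)
  | succ N ih =>
    intro G hcard hncol
    -- G has an edge
    have hedge : ∃ v w, G.Adj v w := by
      by_contra h
      push_neg at h
      exact hncol (colorable_of_no_edge h n hn)
    by_cases hall : ∀ v w, G.Adj v w → (G.deleteEdges {s(v, w)}).Colorable n
    · obtain ⟨v, w, hvw⟩ := hedge
      exact ⟨G, le_refl _, hncol, v, w, hvw, hall v w hvw⟩
    · push_neg at hall
      obtain ⟨v, w, hvw, hncol'⟩ := hall
      have hlt : (G.deleteEdges {s(v, w)}).edgeSet.ncard < G.edgeSet.ncard := by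
        apply Set.ncard_lt_ncard _ (Set.toFinite _)
        rw [edgeSet_deleteEdges]
        refine (Set.ssubset_iff_of_subset Set.diff_subset).mpr ?_
        refine ⟨s(v, w), G.mem_edgeSet.mpr hvw, ?_⟩
        simp
      obtain ⟨H, hle, h2, h3⟩ := ih (G.deleteEdges {s(v, w)}) (by omega) hncol'
      exact ⟨H, hle.trans (deleteEdges_le _), h2, h3⟩

open SimpleGraph

/-- The subgraph of `H` minus the edge `vw`, keeping only edges colored with `{c v, a}`. -/
def kempeGraph {V : Type*} (H : SimpleGraph V) {α : Type*} (c : V → α) (v w : V) (a : α) :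
    SimpleGraph V where
  Adj x y := H.Adj x y ∧ s(x, y) ≠ s(v, w) ∧
    ((c x = c v ∧ c y = a) ∨ (c x = a ∧ c y = c v))
  symm := by
    constructor
    intro x y ⟨h1, h2, h3⟩
    exact ⟨h1.symm, by rwa [Sym2.eq_swap], h3.symm.imp And.comm.mp And.comm.mp⟩
  loopless := ⟨fun x ⟨h1, _⟩ => H.loopless.irrefl x h1⟩

lemma kempe_reachable {V : Type*} (H : SimpleGraph V) {n : ℕ} (c : V → Fin n) (v w : V)
    (hc : ∀ x y, H.Adj x y → s(x, y) ≠ s(v, w) → c x ≠ c y)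
    (hcvw : c v = c w) (a : Fin n) (ha : a ≠ c v)
    (hncol : ¬ H.Colorable n) :
    (kempeGraph H c v w a).Reachable v w := by
  by_contra hreach
  set K := kempeGraph H c v w a with hK
  classical
  set c' : V → Fin n := fun x => if K.Reachable v x then Equiv.swap (c v) a (c x) else c x
    with hc'
  have hstep : ∀ x y, K.Reachable v x → K.Adj x y → K.Reachable v y :=
    fun x y hr hadj => hr.trans hadj.reachable
  refine hncol ⟨Coloring.mk c' ?_⟩
  intro x y hxy
  by_cases hvwe : s(x, y) = s(v, w)
  · rw [Sym2.eq_iff] at hvwe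
    rcases hvwe with ⟨hx, hy⟩ | ⟨hx, hy⟩
    all_goals {
      have h1 : c' v = a := by
        simp only [hc', if_pos (Reachable.refl v)]
        exact Equiv.swap_apply_left _ _
      have h2 : c' w = c v := by
        simp only [hc', if_neg hreach]
        exact hcvw.symm
      first
      | (rw [hx, hy, h1, h2]; exact ha)
      | (rw [hx, hy, h1, h2]; exact fun h => ha h.symm) }
  · have hne : c x ≠ c y := hc x y hxy hvwe
    simp only [hc']
    split_ifs with h1 h2 h2
    · exact fun h => hne (Equiv.injective _ h)
    · -- x reachable, y not
      intro heq
      rcases eq_or_ne (c x) (c v) with h3 | h3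
      · rw [h3, Equiv.swap_apply_left] at heq
        exact h2 (hstep x y h1 ⟨hxy, hvwe, Or.inl ⟨h3, heq.symm⟩⟩)
      · rcases eq_or_ne (c x) a with h4 | h4
        · rw [h4, Equiv.swap_apply_right] at heq
          exact h2 (hstep x y h1 ⟨hxy, hvwe, Or.inr ⟨h4, heq.symm⟩⟩)
        · rw [Equiv.swap_apply_of_ne_of_ne h3 h4] at heq
          exact hne heq
    · -- y reachable, x not
      intro heq
      rcases eq_or_ne (c y) (c v) with h3 | h3
      · rw [h3, Equiv.swap_apply_left] at heq
        exact h1 (hstep y x h2 ⟨hxy.symm, by rwa [Sym2.eq_swap], Or.inl ⟨h3, heq⟩⟩)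
      · rcases eq_or_ne (c y) a with h4 | h4
        · rw [h4, Equiv.swap_apply_right] at heq
          exact h1 (hstep y x h2 ⟨hxy.symm, by rwa [Sym2.eq_swap], Or.inr ⟨h4, heq⟩⟩)
        · rw [Equiv.swap_apply_of_ne_of_ne h3 h4] at heq
          exact hne heq
    · exact hne

open SimpleGraph

lemma fin3_cases (a : Fin 3) : a = 0 ∨ a = 1 ∨ a = 2 := by fin_cases a <;> simp

lemma fin3_ne10 {a : Fin 3} (h : a = 1) : ¬ (a = 0) := by rw [h]; decide
lemma fin3_ne20 {a : Fin 3} (h : a = 2) : ¬ (a = 0) := by rw [h]; decide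
lemma fin3_ne21 {a : Fin 3} (h : a = 2) : ¬ (a = 1) := by rw [h]; decide

lemma cmp_adj {ι : Type*} {F : ι → Type*} {u u' : Σ i, F i} :
    (completeMultipartiteGraph F).Adj u u' ↔ u.1 ≠ u'.1 := Iff.rfl

def idx3 {m : ℕ} (u : Σ j, (![Fin 1, Fin 1, Fin (m + 1)]) j) : Fin (m + 1) :=
  if h : u.1 = 2 then cast (by rw [h]; rfl) u.2 else 0

lemma idx3_heq {m : ℕ} {u : Σ j, (![Fin 1, Fin 1, Fin (m + 1)]) j} (h : u.1 = 2) :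
    HEq (idx3 u) u.2 := by
  rw [idx3, dif_pos h]; exact cast_heq _ _

lemma sigma2_eq {m : ℕ} {u u' : Σ j, (![Fin 1, Fin 1, Fin (m + 1)]) j}
    (h : u.1 = 2) (h' : u'.1 = 2) (hidx : idx3 u = idx3 u') : u = u' := by
  have hh : HEq u.2 u'.2 := ((idx3_heq h).symm.trans (heq_of_eq hidx)).trans (idx3_heq h')
  exact Sigma.ext (h.trans h'.symm) hh

lemma sig0_eq {m : ℕ} {u u' : Σ j, (![Fin 1, Fin 1, Fin (m + 1)]) j}
    (h : u.1 = 0) (h' : u'.1 = 0) : u = u' := by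
  obtain ⟨x, xs⟩ := u; obtain ⟨y, ys⟩ := u'
  dsimp at h h'
  subst h; subst h'
  have : xs = ys := @Subsingleton.elim (Fin 1) _ xs ys
  rw [this]

lemma sig1_eq {m : ℕ} {u u' : Σ j, (![Fin 1, Fin 1, Fin (m + 1)]) j}
    (h : u.1 = 1) (h' : u'.1 = 1) : u = u' := by
  obtain ⟨x, xs⟩ := u; obtain ⟨y, ys⟩ := u'
  dsimp at h h'
  subst h; subst h'
  have : xs = ys := @Subsingleton.elim (Fin 1) _ xs ys
  rw [this]

def fdef {V : Type*} {m : ℕ} (v w : V) (t : Fin (m + 1) → V)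
    (u : Σ j, (![Fin 1, Fin 1, Fin (m + 1)]) j) : V :=
  if u.1 = 0 then v else if u.1 = 1 then w else t (idx3 u)

lemma fdef_0 {V : Type*} {m : ℕ} {v w : V} {t : Fin (m + 1) → V}
    {u : Σ j, (![Fin 1, Fin 1, Fin (m + 1)]) j} (h : u.1 = 0) : fdef v w t u = v := by
  rw [fdef, if_pos h]

lemma fdef_1 {V : Type*} {m : ℕ} {v w : V} {t : Fin (m + 1) → V}
    {u : Σ j, (![Fin 1, Fin 1, Fin (m + 1)]) j} (h : u.1 = 1) : fdef v w t u = w := by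
  rw [fdef, if_neg (fin3_ne10 h), if_pos h]

lemma fdef_2 {V : Type*} {m : ℕ} {v w : V} {t : Fin (m + 1) → V}
    {u : Σ j, (![Fin 1, Fin 1, Fin (m + 1)]) j} (h : u.1 = 2) : fdef v w t u = t (idx3 u) := by
  rw [fdef, if_neg (fin3_ne20 h), if_neg (fin3_ne21 h)]

lemma fdef_inj {V : Type*} {m : ℕ} {v w : V} {t : Fin (m + 1) → V}
    (hvw : v ≠ w) (htv : ∀ i, t i ≠ v) (htw : ∀ i, t i ≠ w) (htinj : Function.Injective t) :
    Function.Injective (fdef v w t) := by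
  intro u u' heq
  rcases fin3_cases u.1 with hu | hu | hu <;> rcases fin3_cases u'.1 with hu' | hu' | hu'
  · exact sig0_eq hu hu'
  · rw [fdef_0 hu, fdef_1 hu'] at heq; exact absurd heq hvw
  · rw [fdef_0 hu, fdef_2 hu'] at heq; exact absurd heq.symm (htv _)
  · rw [fdef_1 hu, fdef_0 hu'] at heq; exact absurd heq.symm hvw
  · exact sig1_eq hu hu'
  · rw [fdef_1 hu, fdef_2 hu'] at heq; exact absurd heq.symm (htw _)
  · rw [fdef_2 hu, fdef_0 hu'] at heq; exact absurd heq (htv _)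
  · rw [fdef_2 hu, fdef_1 hu'] at heq; exact absurd heq (htw _)
  · rw [fdef_2 hu, fdef_2 hu'] at heq; exact sigma2_eq hu hu' (htinj heq)

section PD
variable {V : Type*} {m : ℕ} (G : SimpleGraph V) (v w : V) (t : Fin (m + 1) → V)

lemma fin3_two {a : Fin 3} (h0 : ¬ a = 0) (h1 : ¬ a = 1) : a = 2 := by
  rcases fin3_cases a with h | h | h
  · exact absurd h h0
  · exact absurd h h1
  · exact h

def Pdef (hGvw : G.Adj v w) (hGvt : ∀ i, G.Adj v (t i)) (Q : ∀ i, G.Walk (t i) w) :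
    ∀ (u u' : Σ j, (![Fin 1, Fin 1, Fin (m + 1)]) j),
      (completeMultipartiteGraph ![Fin 1, Fin 1, Fin (m + 1)]).Adj u u' →
      G.Walk (fdef v w t u) (fdef v w t u') := fun u u' h =>
  if h0 : u.1 = 0 then
    if h0' : u'.1 = 0 then ((cmp_adj.mp h) (h0.trans h0'.symm)).elim
    else if h1' : u'.1 = 1 then (hGvw.toWalk).copy (fdef_0 h0).symm (fdef_1 h1').symm
    else ((hGvt (idx3 u')).toWalk).copy (fdef_0 h0).symm (fdef_2 (fin3_two h0' h1')).symm
  else if h1 : u.1 = 1 then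
    if h0' : u'.1 = 0 then (hGvw.toWalk.reverse).copy (fdef_1 h1).symm (fdef_0 h0').symm
    else if h1' : u'.1 = 1 then ((cmp_adj.mp h) (h1.trans h1'.symm)).elim
    else ((Q (idx3 u')).reverse).copy (fdef_1 h1).symm (fdef_2 (fin3_two h0' h1')).symm
  else
    if h0' : u'.1 = 0 then
      ((hGvt (idx3 u)).toWalk.reverse).copy (fdef_2 (fin3_two h0 h1)).symm (fdef_0 h0').symm
    else if h1' : u'.1 = 1 then (Q (idx3 u)).copy (fdef_2 (fin3_two h0 h1)).symm (fdef_1 h1').symm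
    else ((cmp_adj.mp h) ((fin3_two h0 h1).trans (fin3_two h0' h1').symm)).elim

variable (hGvw : G.Adj v w) (hGvt : ∀ i, G.Adj v (t i)) (Q : ∀ i, G.Walk (t i) w)
variable {u u' : Σ j, (![Fin 1, Fin 1, Fin (m + 1)]) j}
  {h : (completeMultipartiteGraph ![Fin 1, Fin 1, Fin (m + 1)]).Adj u u'}

lemma Pdef_01 (h0 : u.1 = 0) (h1 : u'.1 = 1) :
    Pdef G v w t hGvw hGvt Q u u' h
      = (hGvw.toWalk).copy (fdef_0 h0).symm (fdef_1 h1).symm := by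
  rw [Pdef, dif_pos h0, dif_neg (fin3_ne10 h1), dif_pos h1]

lemma Pdef_02 (h0 : u.1 = 0) (h2 : u'.1 = 2) :
    Pdef G v w t hGvw hGvt Q u u' h
      = ((hGvt (idx3 u')).toWalk).copy (fdef_0 h0).symm (fdef_2 h2).symm := by
  rw [Pdef, dif_pos h0, dif_neg (fin3_ne20 h2), dif_neg (fin3_ne21 h2)]

lemma Pdef_10 (h1 : u.1 = 1) (h0 : u'.1 = 0) :
    Pdef G v w t hGvw hGvt Q u u' h
      = (hGvw.toWalk.reverse).copy (fdef_1 h1).symm (fdef_0 h0).symm := by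
  rw [Pdef, dif_neg (fin3_ne10 h1), dif_pos h1, dif_pos h0]

lemma Pdef_12 (h1 : u.1 = 1) (h2 : u'.1 = 2) :
    Pdef G v w t hGvw hGvt Q u u' h
      = ((Q (idx3 u')).reverse).copy (fdef_1 h1).symm (fdef_2 h2).symm := by
  rw [Pdef, dif_neg (fin3_ne10 h1), dif_pos h1, dif_neg (fin3_ne20 h2), dif_neg (fin3_ne21 h2)]

lemma Pdef_20 (h2 : u.1 = 2) (h0 : u'.1 = 0) :
    Pdef G v w t hGvw hGvt Q u u' h
      = ((hGvt (idx3 u)).toWalk.reverse).copy (fdef_2 h2).symm (fdef_0 h0).symm := by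
  rw [Pdef, dif_neg (fin3_ne20 h2), dif_neg (fin3_ne21 h2), dif_pos h0]

lemma Pdef_21 (h2 : u.1 = 2) (h1 : u'.1 = 1) :
    Pdef G v w t hGvw hGvt Q u u' h
      = (Q (idx3 u)).copy (fdef_2 h2).symm (fdef_1 h1).symm := by
  rw [Pdef, dif_neg (fin3_ne20 h2), dif_neg (fin3_ne21 h2), dif_neg (fin3_ne10 h1), dif_pos h1]

lemma Pdef_path (hQp : ∀ i, (Q i).IsPath) :
    ∀ u u' (h : (completeMultipartiteGraph ![Fin 1, Fin 1, Fin (m + 1)]).Adj u u'),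
      (Pdef G v w t hGvw hGvt Q u u' h).IsPath := by
  intro u u' h
  have hs : ∀ {x y : V} (hxy : G.Adj x y), hxy.toWalk.IsPath := fun hxy =>
    (SimpleGraph.Path.singleton hxy).2
  rcases fin3_cases u.1 with hu | hu | hu <;> rcases fin3_cases u'.1 with hu' | hu' | hu'
  · exact absurd (hu.trans hu'.symm) (cmp_adj.mp h)
  · rw [Pdef_01 (h := h) G v w t hGvw hGvt Q hu hu', Walk.isPath_copy]; exact hs hGvw
  · rw [Pdef_02 (h := h) G v w t hGvw hGvt Q hu hu', Walk.isPath_copy]; exact hs (hGvt _)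
  · rw [Pdef_10 (h := h) G v w t hGvw hGvt Q hu hu', Walk.isPath_copy,
      Walk.isPath_reverse_iff]; exact hs hGvw
  · exact absurd (hu.trans hu'.symm) (cmp_adj.mp h)
  · rw [Pdef_12 (h := h) G v w t hGvw hGvt Q hu hu', Walk.isPath_copy,
      Walk.isPath_reverse_iff]; exact hQp _
  · rw [Pdef_20 (h := h) G v w t hGvw hGvt Q hu hu', Walk.isPath_copy,
      Walk.isPath_reverse_iff]; exact hs (hGvt _)
  · rw [Pdef_21 (h := h) G v w t hGvw hGvt Q hu hu', Walk.isPath_copy]; exact hQp _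
  · exact absurd (hu.trans hu'.symm) (cmp_adj.mp h)

lemma Pdef_disj (hvne : v ≠ w) (htv : ∀ i, t i ≠ v) (htw : ∀ i, t i ≠ w)
    (htinj : Function.Injective t)
    (hQvw : ∀ i, s(v, w) ∉ (Q i).edges)
    (hQvt : ∀ i j, s(v, t j) ∉ (Q i).edges)
    (hQdisj : ∀ i j, i ≠ j → List.Disjoint (Q i).edges (Q j).edges) :
    ∀ u u' u'' u''' (h : (completeMultipartiteGraph ![Fin 1, Fin 1, Fin (m + 1)]).Adj u u')
      (h' : (completeMultipartiteGraph ![Fin 1, Fin 1, Fin (m + 1)]).Adj u'' u'''),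
      s(u, u') ≠ s(u'', u''') →
      List.Disjoint (Pdef G v w t hGvw hGvt Q u u' h).edges
        (Pdef G v w t hGvw hGvt Q u'' u''' h').edges := by
  intro u u' u'' u''' h h' hne
  have hE : ∀ {x y : V} (hxy : G.Adj x y), hxy.toWalk.edges = [s(x, y)] := fun _ => rfl
  have hA : ∀ j, s(v, w) ≠ s(v, t j) := by
    intro j hj
    rw [Sym2.eq_iff] at hj
    rcases hj with ⟨-, h2⟩ | ⟨h1, -⟩
    · exact htw j h2.symm
    · exact htv j h1.symm
  have hB : ∀ i j, s(v, t i) = s(v, t j) → i = j := by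
    intro i j hij
    rw [Sym2.eq_iff] at hij
    rcases hij with ⟨-, h2⟩ | ⟨h1, -⟩
    · exact htinj h2
    · exact absurd h1.symm (htv j)
  rcases fin3_cases u.1 with hu | hu | hu
  · rcases fin3_cases u'.1 with hu' | hu' | hu'
    · exact absurd (hu.trans hu'.symm) (cmp_adj.mp h)
    · rcases fin3_cases u''.1 with huu | huu | huu
      · rcases fin3_cases u'''.1 with huuu | huuu | huuu
        · exact absurd (huu.trans huuu.symm) (cmp_adj.mp h')
        · rw [Pdef_01 (h := h) G v w t hGvw hGvt Q hu hu', Pdef_01 (h := h') G v w t hGvw hGvt Q huu huuu]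
          simp only [Walk.edges_copy, Walk.edges_reverse, hE, List.reverse_cons, List.reverse_nil, List.nil_append]
          exact absurd (by rw [sig0_eq hu huu, sig1_eq hu' huuu]) hne
        · rw [Pdef_01 (h := h) G v w t hGvw hGvt Q hu hu', Pdef_02 (h := h') G v w t hGvw hGvt Q huu huuu]
          simp only [Walk.edges_copy, Walk.edges_reverse, hE, List.reverse_cons, List.reverse_nil, List.nil_append]
          intro e he1 he2
          rw [List.mem_singleton] at he1
          rw [List.mem_singleton] at he2
          exact hA _ (he1.symm.trans he2)
      · rcases fin3_cases u'''.1 with huuu | huuu | huuu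
        · rw [Pdef_01 (h := h) G v w t hGvw hGvt Q hu hu', Pdef_10 (h := h') G v w t hGvw hGvt Q huu huuu]
          simp only [Walk.edges_copy, Walk.edges_reverse, hE, List.reverse_cons, List.reverse_nil, List.nil_append]
          refine absurd ?_ hne
          rw [sig0_eq hu huuu, sig1_eq hu' huu]
          exact Sym2.eq_swap
        · exact absurd (huu.trans huuu.symm) (cmp_adj.mp h')
        · rw [Pdef_01 (h := h) G v w t hGvw hGvt Q hu hu', Pdef_12 (h := h') G v w t hGvw hGvt Q huu huuu]
          simp only [Walk.edges_copy, Walk.edges_reverse, hE, List.reverse_cons, List.reverse_nil, List.nil_append]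
          intro e he1 he2
          rw [List.mem_singleton] at he1
          rw [List.mem_reverse] at he2
          exact hQvw _ (by rw [← he1]; exact he2)
      · rcases fin3_cases u'''.1 with huuu | huuu | huuu
        · rw [Pdef_01 (h := h) G v w t hGvw hGvt Q hu hu', Pdef_20 (h := h') G v w t hGvw hGvt Q huu huuu]
          simp only [Walk.edges_copy, Walk.edges_reverse, hE, List.reverse_cons, List.reverse_nil, List.nil_append]
          intro e he1 he2
          rw [List.mem_singleton] at he1
          rw [List.mem_singleton] at he2
          exact hA _ (he1.symm.trans he2)
        · rw [Pdef_01 (h := h) G v w t hGvw hGvt Q hu hu', Pdef_21 (h := h') G v w t hGvw hGvt Q huu huuu]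
          simp only [Walk.edges_copy, Walk.edges_reverse, hE, List.reverse_cons, List.reverse_nil, List.nil_append]
          intro e he1 he2
          rw [List.mem_singleton] at he1
          exact hQvw _ (by rw [← he1]; exact he2)
        · exact absurd (huu.trans huuu.symm) (cmp_adj.mp h')
    · rcases fin3_cases u''.1 with huu | huu | huu
      · rcases fin3_cases u'''.1 with huuu | huuu | huuu
        · exact absurd (huu.trans huuu.symm) (cmp_adj.mp h')
        · rw [Pdef_02 (h := h) G v w t hGvw hGvt Q hu hu', Pdef_01 (h := h') G v w t hGvw hGvt Q huu huuu]
          simp only [Walk.edges_copy, Walk.edges_reverse, hE, List.reverse_cons, List.reverse_nil, List.nil_append]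
          intro e he1 he2
          rw [List.mem_singleton] at he1
          rw [List.mem_singleton] at he2
          exact hA _ (he2.symm.trans he1)
        · rw [Pdef_02 (h := h) G v w t hGvw hGvt Q hu hu', Pdef_02 (h := h') G v w t hGvw hGvt Q huu huuu]
          simp only [Walk.edges_copy, Walk.edges_reverse, hE, List.reverse_cons, List.reverse_nil, List.nil_append]
          have hij : idx3 u' ≠ idx3 u''' := fun hidx => hne (by rw [sig0_eq hu huu, sigma2_eq hu' huuu hidx])
          intro e he1 he2
          rw [List.mem_singleton] at he1 he2
          exact hij (hB _ _ (he1.symm.trans he2))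
      · rcases fin3_cases u'''.1 with huuu | huuu | huuu
        · rw [Pdef_02 (h := h) G v w t hGvw hGvt Q hu hu', Pdef_10 (h := h') G v w t hGvw hGvt Q huu huuu]
          simp only [Walk.edges_copy, Walk.edges_reverse, hE, List.reverse_cons, List.reverse_nil, List.nil_append]
          intro e he1 he2
          rw [List.mem_singleton] at he1
          rw [List.mem_singleton] at he2
          exact hA _ (he2.symm.trans he1)
        · exact absurd (huu.trans huuu.symm) (cmp_adj.mp h')
        · rw [Pdef_02 (h := h) G v w t hGvw hGvt Q hu hu', Pdef_12 (h := h') G v w t hGvw hGvt Q huu huuu]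
          simp only [Walk.edges_copy, Walk.edges_reverse, hE, List.reverse_cons, List.reverse_nil, List.nil_append]
          intro e he1 he2
          rw [List.mem_singleton] at he1
          rw [List.mem_reverse] at he2
          exact hQvt _ _ (by rw [← he1]; exact he2)
      · rcases fin3_cases u'''.1 with huuu | huuu | huuu
        · rw [Pdef_02 (h := h) G v w t hGvw hGvt Q hu hu', Pdef_20 (h := h') G v w t hGvw hGvt Q huu huuu]
          simp only [Walk.edges_copy, Walk.edges_reverse, hE, List.reverse_cons, List.reverse_nil, List.nil_append]
          have hij : idx3 u' ≠ idx3 u'' := fun hidx => hne (by rw [sig0_eq hu huuu, sigma2_eq hu' huu hidx]; exact Sym2.eq_swap)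
          intro e he1 he2
          rw [List.mem_singleton] at he1 he2
          exact hij (hB _ _ (he1.symm.trans he2))
        · rw [Pdef_02 (h := h) G v w t hGvw hGvt Q hu hu', Pdef_21 (h := h') G v w t hGvw hGvt Q huu huuu]
          simp only [Walk.edges_copy, Walk.edges_reverse, hE, List.reverse_cons, List.reverse_nil, List.nil_append]
          intro e he1 he2
          rw [List.mem_singleton] at he1
          exact hQvt _ _ (by rw [← he1]; exact he2)
        · exact absurd (huu.trans huuu.symm) (cmp_adj.mp h')
  · rcases fin3_cases u'.1 with hu' | hu' | hu'
    · rcases fin3_cases u''.1 with huu | huu | huu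
      · rcases fin3_cases u'''.1 with huuu | huuu | huuu
        · exact absurd (huu.trans huuu.symm) (cmp_adj.mp h')
        · rw [Pdef_10 (h := h) G v w t hGvw hGvt Q hu hu', Pdef_01 (h := h') G v w t hGvw hGvt Q huu huuu]
          simp only [Walk.edges_copy, Walk.edges_reverse, hE, List.reverse_cons, List.reverse_nil, List.nil_append]
          refine absurd ?_ hne
          rw [sig1_eq hu huuu, sig0_eq hu' huu]
          exact Sym2.eq_swap
        · rw [Pdef_10 (h := h) G v w t hGvw hGvt Q hu hu', Pdef_02 (h := h') G v w t hGvw hGvt Q huu huuu]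
          simp only [Walk.edges_copy, Walk.edges_reverse, hE, List.reverse_cons, List.reverse_nil, List.nil_append]
          intro e he1 he2
          rw [List.mem_singleton] at he1
          rw [List.mem_singleton] at he2
          exact hA _ (he1.symm.trans he2)
      · rcases fin3_cases u'''.1 with huuu | huuu | huuu
        · rw [Pdef_10 (h := h) G v w t hGvw hGvt Q hu hu', Pdef_10 (h := h') G v w t hGvw hGvt Q huu huuu]
          simp only [Walk.edges_copy, Walk.edges_reverse, hE, List.reverse_cons, List.reverse_nil, List.nil_append]
          exact absurd (by rw [sig1_eq hu huu, sig0_eq hu' huuu]) hne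
        · exact absurd (huu.trans huuu.symm) (cmp_adj.mp h')
        · rw [Pdef_10 (h := h) G v w t hGvw hGvt Q hu hu', Pdef_12 (h := h') G v w t hGvw hGvt Q huu huuu]
          simp only [Walk.edges_copy, Walk.edges_reverse, hE, List.reverse_cons, List.reverse_nil, List.nil_append]
          intro e he1 he2
          rw [List.mem_singleton] at he1
          rw [List.mem_reverse] at he2
          exact hQvw _ (by rw [← he1]; exact he2)
      · rcases fin3_cases u'''.1 with huuu | huuu | huuu
        · rw [Pdef_10 (h := h) G v w t hGvw hGvt Q hu hu', Pdef_20 (h := h') G v w t hGvw hGvt Q huu huuu]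
          simp only [Walk.edges_copy, Walk.edges_reverse, hE, List.reverse_cons, List.reverse_nil, List.nil_append]
          intro e he1 he2
          rw [List.mem_singleton] at he1
          rw [List.mem_singleton] at he2
          exact hA _ (he1.symm.trans he2)
        · rw [Pdef_10 (h := h) G v w t hGvw hGvt Q hu hu', Pdef_21 (h := h') G v w t hGvw hGvt Q huu huuu]
          simp only [Walk.edges_copy, Walk.edges_reverse, hE, List.reverse_cons, List.reverse_nil, List.nil_append]
          intro e he1 he2
          rw [List.mem_singleton] at he1
          exact hQvw _ (by rw [← he1]; exact he2)
        · exact absurd (huu.trans huuu.symm) (cmp_adj.mp h')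
    · exact absurd (hu.trans hu'.symm) (cmp_adj.mp h)
    · rcases fin3_cases u''.1 with huu | huu | huu
      · rcases fin3_cases u'''.1 with huuu | huuu | huuu
        · exact absurd (huu.trans huuu.symm) (cmp_adj.mp h')
        · rw [Pdef_12 (h := h) G v w t hGvw hGvt Q hu hu', Pdef_01 (h := h') G v w t hGvw hGvt Q huu huuu]
          simp only [Walk.edges_copy, Walk.edges_reverse, hE, List.reverse_cons, List.reverse_nil, List.nil_append]
          intro e he1 he2
          rw [List.mem_reverse] at he1
          rw [List.mem_singleton] at he2
          exact hQvw _ (by rw [← he2]; exact he1)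
        · rw [Pdef_12 (h := h) G v w t hGvw hGvt Q hu hu', Pdef_02 (h := h') G v w t hGvw hGvt Q huu huuu]
          simp only [Walk.edges_copy, Walk.edges_reverse, hE, List.reverse_cons, List.reverse_nil, List.nil_append]
          intro e he1 he2
          rw [List.mem_reverse] at he1
          rw [List.mem_singleton] at he2
          exact hQvt _ _ (by rw [← he2]; exact he1)
      · rcases fin3_cases u'''.1 with huuu | huuu | huuu
        · rw [Pdef_12 (h := h) G v w t hGvw hGvt Q hu hu', Pdef_10 (h := h') G v w t hGvw hGvt Q huu huuu]
          simp only [Walk.edges_copy, Walk.edges_reverse, hE, List.reverse_cons, List.reverse_nil, List.nil_append]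
          intro e he1 he2
          rw [List.mem_reverse] at he1
          rw [List.mem_singleton] at he2
          exact hQvw _ (by rw [← he2]; exact he1)
        · exact absurd (huu.trans huuu.symm) (cmp_adj.mp h')
        · rw [Pdef_12 (h := h) G v w t hGvw hGvt Q hu hu', Pdef_12 (h := h') G v w t hGvw hGvt Q huu huuu]
          simp only [Walk.edges_copy, Walk.edges_reverse, hE, List.reverse_cons, List.reverse_nil, List.nil_append]
          have hij : idx3 u' ≠ idx3 u''' := fun hidx => hne (by rw [sig1_eq hu huu, sigma2_eq hu' huuu hidx])
          intro e he1 he2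
          rw [List.mem_reverse] at he1
          rw [List.mem_reverse] at he2
          exact hQdisj _ _ hij he1 he2
      · rcases fin3_cases u'''.1 with huuu | huuu | huuu
        · rw [Pdef_12 (h := h) G v w t hGvw hGvt Q hu hu', Pdef_20 (h := h') G v w t hGvw hGvt Q huu huuu]
          simp only [Walk.edges_copy, Walk.edges_reverse, hE, List.reverse_cons, List.reverse_nil, List.nil_append]
          intro e he1 he2
          rw [List.mem_reverse] at he1
          rw [List.mem_singleton] at he2
          exact hQvt _ _ (by rw [← he2]; exact he1)
        · rw [Pdef_12 (h := h) G v w t hGvw hGvt Q hu hu', Pdef_21 (h := h') G v w t hGvw hGvt Q huu huuu]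
          simp only [Walk.edges_copy, Walk.edges_reverse, hE, List.reverse_cons, List.reverse_nil, List.nil_append]
          have hij : idx3 u' ≠ idx3 u'' := fun hidx => hne (by rw [sig1_eq hu huuu, sigma2_eq hu' huu hidx]; exact Sym2.eq_swap)
          intro e he1 he2
          rw [List.mem_reverse] at he1
          exact hQdisj _ _ hij he1 he2
        · exact absurd (huu.trans huuu.symm) (cmp_adj.mp h')
  · rcases fin3_cases u'.1 with hu' | hu' | hu'
    · rcases fin3_cases u''.1 with huu | huu | huu
      · rcases fin3_cases u'''.1 with huuu | huuu | huuu
        · exact absurd (huu.trans huuu.symm) (cmp_adj.mp h')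
        · rw [Pdef_20 (h := h) G v w t hGvw hGvt Q hu hu', Pdef_01 (h := h') G v w t hGvw hGvt Q huu huuu]
          simp only [Walk.edges_copy, Walk.edges_reverse, hE, List.reverse_cons, List.reverse_nil, List.nil_append]
          intro e he1 he2
          rw [List.mem_singleton] at he1
          rw [List.mem_singleton] at he2
          exact hA _ (he2.symm.trans he1)
        · rw [Pdef_20 (h := h) G v w t hGvw hGvt Q hu hu', Pdef_02 (h := h') G v w t hGvw hGvt Q huu huuu]
          simp only [Walk.edges_copy, Walk.edges_reverse, hE, List.reverse_cons, List.reverse_nil, List.nil_append]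
          have hij : idx3 u ≠ idx3 u''' := fun hidx => hne (by rw [sigma2_eq hu huuu hidx, sig0_eq hu' huu]; exact Sym2.eq_swap)
          intro e he1 he2
          rw [List.mem_singleton] at he1 he2
          exact hij (hB _ _ (he1.symm.trans he2))
      · rcases fin3_cases u'''.1 with huuu | huuu | huuu
        · rw [Pdef_20 (h := h) G v w t hGvw hGvt Q hu hu', Pdef_10 (h := h') G v w t hGvw hGvt Q huu huuu]
          simp only [Walk.edges_copy, Walk.edges_reverse, hE, List.reverse_cons, List.reverse_nil, List.nil_append]
          intro e he1 he2
          rw [List.mem_singleton] at he1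
          rw [List.mem_singleton] at he2
          exact hA _ (he2.symm.trans he1)
        · exact absurd (huu.trans huuu.symm) (cmp_adj.mp h')
        · rw [Pdef_20 (h := h) G v w t hGvw hGvt Q hu hu', Pdef_12 (h := h') G v w t hGvw hGvt Q huu huuu]
          simp only [Walk.edges_copy, Walk.edges_reverse, hE, List.reverse_cons, List.reverse_nil, List.nil_append]
          intro e he1 he2
          rw [List.mem_singleton] at he1
          rw [List.mem_reverse] at he2
          exact hQvt _ _ (by rw [← he1]; exact he2)
      · rcases fin3_cases u'''.1 with huuu | huuu | huuu
        · rw [Pdef_20 (h := h) G v w t hGvw hGvt Q hu hu', Pdef_20 (h := h') G v w t hGvw hGvt Q huu huuu]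
          simp only [Walk.edges_copy, Walk.edges_reverse, hE, List.reverse_cons, List.reverse_nil, List.nil_append]
          have hij : idx3 u ≠ idx3 u'' := fun hidx => hne (by rw [sigma2_eq hu huu hidx, sig0_eq hu' huuu])
          intro e he1 he2
          rw [List.mem_singleton] at he1 he2
          exact hij (hB _ _ (he1.symm.trans he2))
        · rw [Pdef_20 (h := h) G v w t hGvw hGvt Q hu hu', Pdef_21 (h := h') G v w t hGvw hGvt Q huu huuu]
          simp only [Walk.edges_copy, Walk.edges_reverse, hE, List.reverse_cons, List.reverse_nil, List.nil_append]
          intro e he1 he2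
          rw [List.mem_singleton] at he1
          exact hQvt _ _ (by rw [← he1]; exact he2)
        · exact absurd (huu.trans huuu.symm) (cmp_adj.mp h')
    · rcases fin3_cases u''.1 with huu | huu | huu
      · rcases fin3_cases u'''.1 with huuu | huuu | huuu
        · exact absurd (huu.trans huuu.symm) (cmp_adj.mp h')
        · rw [Pdef_21 (h := h) G v w t hGvw hGvt Q hu hu', Pdef_01 (h := h') G v w t hGvw hGvt Q huu huuu]
          simp only [Walk.edges_copy, Walk.edges_reverse, hE, List.reverse_cons, List.reverse_nil, List.nil_append]
          intro e he1 he2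
          rw [List.mem_singleton] at he2
          exact hQvw _ (by rw [← he2]; exact he1)
        · rw [Pdef_21 (h := h) G v w t hGvw hGvt Q hu hu', Pdef_02 (h := h') G v w t hGvw hGvt Q huu huuu]
          simp only [Walk.edges_copy, Walk.edges_reverse, hE, List.reverse_cons, List.reverse_nil, List.nil_append]
          intro e he1 he2
          rw [List.mem_singleton] at he2
          exact hQvt _ _ (by rw [← he2]; exact he1)
      · rcases fin3_cases u'''.1 with huuu | huuu | huuu
        · rw [Pdef_21 (h := h) G v w t hGvw hGvt Q hu hu', Pdef_10 (h := h') G v w t hGvw hGvt Q huu huuu]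
          simp only [Walk.edges_copy, Walk.edges_reverse, hE, List.reverse_cons, List.reverse_nil, List.nil_append]
          intro e he1 he2
          rw [List.mem_singleton] at he2
          exact hQvw _ (by rw [← he2]; exact he1)
        · exact absurd (huu.trans huuu.symm) (cmp_adj.mp h')
        · rw [Pdef_21 (h := h) G v w t hGvw hGvt Q hu hu', Pdef_12 (h := h') G v w t hGvw hGvt Q huu huuu]
          simp only [Walk.edges_copy, Walk.edges_reverse, hE, List.reverse_cons, List.reverse_nil, List.nil_append]
          have hij : idx3 u ≠ idx3 u''' := fun hidx => hne (by rw [sigma2_eq hu huuu hidx, sig1_eq hu' huu]; exact Sym2.eq_swap)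
          intro e he1 he2
          rw [List.mem_reverse] at he2
          exact hQdisj _ _ hij he1 he2
      · rcases fin3_cases u'''.1 with huuu | huuu | huuu
        · rw [Pdef_21 (h := h) G v w t hGvw hGvt Q hu hu', Pdef_20 (h := h') G v w t hGvw hGvt Q huu huuu]
          simp only [Walk.edges_copy, Walk.edges_reverse, hE, List.reverse_cons, List.reverse_nil, List.nil_append]
          intro e he1 he2
          rw [List.mem_singleton] at he2
          exact hQvt _ _ (by rw [← he2]; exact he1)
        · rw [Pdef_21 (h := h) G v w t hGvw hGvt Q hu hu', Pdef_21 (h := h') G v w t hGvw hGvt Q huu huuu]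
          simp only [Walk.edges_copy, Walk.edges_reverse, hE, List.reverse_cons, List.reverse_nil, List.nil_append]
          have hij : idx3 u ≠ idx3 u'' := fun hidx => hne (by rw [sigma2_eq hu huu hidx, sig1_eq hu' huuu])
          intro e he1 he2
          exact hQdisj _ _ hij he1 he2
        · exact absurd (huu.trans huuu.symm) (cmp_adj.mp h')
    · exact absurd (hu.trans hu'.symm) (cmp_adj.mp h)

end PD

lemma walk_peel {V : Type*} {G : SimpleGraph V} {v w : V} (r : G.Walk v w) (hr : r.IsPath)
    (hne : v ≠ w) :
    ∃ (x : V) (_ : G.Adj v x) (q : G.Walk x w), q.IsPath ∧ v ∉ q.support := by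
  cases r with
  | nil => exact absurd rfl hne
  | cons hadj q =>
    rw [Walk.cons_isPath_iff] at hr
    exact ⟨_, hadj, q, hr.1, hr.2⟩

/-- Every graph with chromatic number at least 3 contains an immersion of the complete
tripartite graph `K_{1, 1, χ(G) - 2}`. -/
theorem statement_2 {V : Type*} [Fintype V] (G : SimpleGraph V) (k : ℕ)
    (hχ : G.chromaticNumber = k) (hk : 3 ≤ k) :
    Immersion G (SimpleGraph.completeMultipartiteGraph ![Fin 1, Fin 1, Fin (k - 2)]) := by
  classical
  obtain ⟨m, rfl⟩ : ∃ m, k = m + 3 := ⟨k - 3, by omega⟩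
  show Immersion G (completeMultipartiteGraph ![Fin 1, Fin 1, Fin (m + 1)])
  have hGncol : ¬ G.Colorable (m + 2) := by
    intro hcol
    have h1 := chromaticNumber_le_iff_colorable.mpr hcol
    rw [hχ] at h1
    have h2 : (m + 3 : ℕ) ≤ (m + 2 : ℕ) := by exact_mod_cast h1
    omega
  obtain ⟨H, hHG, hHncol, v, w, hvw, hdel⟩ :=
    exists_critical (m + 2) (by omega) G.edgeSet.ncard G le_rfl hGncol
  obtain ⟨c0⟩ := hdel
  have hc0 : ∀ x y, H.Adj x y → s(x, y) ≠ s(v, w) → c0 x ≠ c0 y := by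
    intro x y hxy hnev
    exact c0.valid (SimpleGraph.deleteEdges_adj.mpr ⟨hxy, by simpa using hnev⟩)
  have hc0vw : c0 v = c0 w := by
    by_contra hnevw
    refine hHncol ⟨Coloring.mk c0 ?_⟩
    intro x y hxy
    by_cases he : s(x, y) = s(v, w)
    · rw [Sym2.eq_iff] at he
      rcases he with ⟨hx, hy⟩ | ⟨hx, hy⟩ <;> rw [hx, hy]
      · exact hnevw
      · exact fun hh => hnevw hh.symm
    · exact hc0 x y hxy he
  set c : V → Fin (m + 2) := fun x => Equiv.swap 0 (c0 v) (c0 x) with hcdef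
  have hc : ∀ x y, H.Adj x y → s(x, y) ≠ s(v, w) → c x ≠ c y :=
    fun x y hxy hnev heq => hc0 x y hxy hnev (Equiv.injective _ heq)
  have hcv : c v = 0 := Equiv.swap_apply_right 0 (c0 v)
  have hcw : c w = 0 := by
    show Equiv.swap 0 (c0 v) (c0 w) = 0
    rw [← hc0vw]
    exact Equiv.swap_apply_right 0 (c0 v)
  have hreach : ∀ i : Fin (m + 1), (kempeGraph H c v w i.succ).Reachable v w := fun i =>
    kempe_reachable H c v w hc (hcv.trans hcw.symm) i.succ
      (by rw [hcv]; exact Fin.succ_ne_zero i) hHncol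
  have hpeel : ∀ i : Fin (m + 1), ∃ (x : V) (_ : (kempeGraph H c v w i.succ).Adj v x)
      (q : (kempeGraph H c v w i.succ).Walk x w), q.IsPath ∧ v ∉ q.support := by
    intro i
    obtain ⟨r⟩ := hreach i
    exact walk_peel r.bypass r.bypass_isPath hvw.ne
  choose t hadj q hq hvsupp using hpeel
  have hct : ∀ i, c (t i) = i.succ := by
    intro i
    rcases (hadj i).2.2 with ⟨-, h2⟩ | ⟨h2, -⟩
    · exact h2
    · rw [hcv] at h2; exact absurd h2.symm (Fin.succ_ne_zero i)
  have htinj : Function.Injective t := fun i j hij =>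
    Fin.succ_injective _ (by rw [← hct i, ← hct j, hij])
  have htv : ∀ i, t i ≠ v := fun i => ((hadj i).1.ne).symm
  have htw : ∀ i, t i ≠ w := fun i hh => Fin.succ_ne_zero i (by rw [← hct i, hh, hcw])
  have hKle : ∀ i : Fin (m + 1), kempeGraph H c v w i.succ ≤ G :=
    fun i x y hxy => hHG hxy.1
  have hsub : ∀ i, ∀ e ∈ (q i).edges, e ∈ G.edgeSet := fun i e he =>
    (SimpleGraph.edgeSet_subset_edgeSet.mpr (hKle i)) ((q i).edges_subset_edgeSet he)
  set Q : ∀ i : Fin (m + 1), G.Walk (t i) w := fun i => (q i).transfer G (hsub i) with hQdef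
  have hQpath : ∀ i, (Q i).IsPath := fun i => Walk.IsPath.transfer (hsub i) (hq i)
  have hQedges : ∀ i, (Q i).edges = (q i).edges := fun i => Walk.edges_transfer _ _
  have hqK : ∀ i, ∀ e ∈ (Q i).edges, e ∈ (kempeGraph H c v w i.succ).edgeSet := by
    intro i e he
    rw [hQedges] at he
    exact (q i).edges_subset_edgeSet he
  have hQvw : ∀ i, s(v, w) ∉ (Q i).edges := by
    intro i hmem
    exact ((kempeGraph H c v w i.succ).mem_edgeSet.mp (hqK i _ hmem)).2.1 rfl
  have hQvt : ∀ i j, s(v, t j) ∉ (Q i).edges := by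
    intro i j hmem
    by_cases hij : i = j
    · subst hij
      have hvsup : v ∈ (Q i).support := Walk.fst_mem_support_of_mem_edges _ hmem
      rw [hQdef] at hvsup
      rw [Walk.support_transfer] at hvsup
      exact hvsupp i hvsup
    · have hKadj := (kempeGraph H c v w i.succ).mem_edgeSet.mp (hqK i _ hmem)
      rcases hKadj.2.2 with ⟨-, h2⟩ | ⟨h2, -⟩
      · rw [hct j] at h2
        exact hij (Fin.succ_injective _ h2).symm
      · rw [hcv] at h2
        exact absurd h2.symm (Fin.succ_ne_zero i)
  have hQdisj : ∀ i j, i ≠ j → List.Disjoint (Q i).edges (Q j).edges := by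
    intro i j hij e
    induction e with
    | h x y =>
      intro hei hej
      have h1 := (kempeGraph H c v w i.succ).mem_edgeSet.mp (hqK i _ hei)
      have h2 := (kempeGraph H c v w j.succ).mem_edgeSet.mp (hqK j _ hej)
      rcases h1.2.2 with ⟨ha1, ha2⟩ | ⟨ha1, ha2⟩ <;> rcases h2.2.2 with ⟨hb1, hb2⟩ | ⟨hb1, hb2⟩
      · exact hij (Fin.succ_injective _ (ha2.symm.trans hb2))
      · rw [hcv] at ha1; rw [ha1] at hb1; exact Fin.succ_ne_zero j hb1.symm
      · rw [hcv] at hb1; rw [hb1] at ha1; exact Fin.succ_ne_zero i ha1.symm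
      · exact hij (Fin.succ_injective _ (ha1.symm.trans hb1))
  have hGvw : G.Adj v w := hHG hvw
  have hGvt : ∀ i, G.Adj v (t i) := fun i => hKle i (hadj i)
  exact ⟨fdef v w t, fdef_inj hGvw.ne htv htw htinj,
    Pdef G v w t hGvw hGvt Q,
    Pdef_path G v w t hGvw hGvt Q hQpath,
    Pdef_disj G v w t hGvw hGvt Q hGvw.ne htv htw htinj hQvw hQvt hQdisj⟩
end

section
/- Let j ≤ k be positive integers, let C_1, …, C_j be subsets of {1, …, n}, each of size k, and let A be a set of size k disjoint from {1, …, n}. Then there are pairwise disjoint matchings M_1, …, M_j in the complete bipartite graph with parts A and {1, …, n} such that, for every i ∈ {1, …, j}, the matching M_i matches A with C_i (i.e., M_i is a perfect matching between A and C_i). Equivalently, there exist bijections σ_i : A → C_i for i ∈ {1, …, j} such that for all i ≠ i′ and all a ∈ A, σ_i(a) ≠ σ_{i′}(a). -/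
open Finset

private lemma dc {j n : ℕ} (R : Fin j → Finset (Fin n)) (A : Finset (Fin j)) (W : Finset (Fin n)) :
    ∑ i ∈ A, (W.filter (fun x => x ∈ R i)).card = ∑ x ∈ W, (A.filter (fun i => x ∈ R i)).card := by
  simp only [card_filter]
  exact Finset.sum_comm

private lemma hall_rows {j n : ℕ} (d : ℕ) (R : Fin j → Finset (Fin n))
    (hcard : ∀ i, (R i).card = d + 1)
    (hload : ∀ x, (univ.filter (fun i => x ∈ R i)).card ≤ d + 1)
    (S : Finset (Fin j)) : S.card ≤ (S.biUnion R).card := by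
  set U := S.biUnion R with hU
  have h1 : ∑ i ∈ S, (U.filter (fun x => x ∈ R i)).card = S.card * (d + 1) := by
    rw [Finset.sum_congr rfl (fun i hi => ?_), Finset.sum_const, smul_eq_mul]
    rw [filter_mem_eq_inter, inter_eq_right.mpr (subset_biUnion_of_mem R hi)]
    exact hcard i
  have h2 : ∑ x ∈ U, (S.filter (fun i => x ∈ R i)).card ≤ U.card * (d + 1) := by
    rw [← smul_eq_mul, ← Finset.sum_const]
    exact Finset.sum_le_sum fun x _ => le_trans
      (card_le_card (filter_subset_filter _ (subset_univ S))) (hload x)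
  have := dc R S U
  have hle : S.card * (d+1) ≤ U.card * (d+1) := by omega
  exact Nat.le_of_mul_le_mul_right hle (Nat.succ_pos d)

private lemma exists_matching {j n : ℕ} (d : ℕ) (R : Fin j → Finset (Fin n))
    (hcard : ∀ i, (R i).card = d + 1)
    (hload : ∀ x, (univ.filter (fun i => x ∈ R i)).card ≤ d + 1) :
    ∃ f : Fin j → Fin n, Function.Injective f ∧ (∀ i, f i ∈ R i) ∧
      ∀ x, (univ.filter (fun i => x ∈ R i)).card = d + 1 → ∃ i, f i = x := by
  classical
  set T : Finset (Fin n) := univ.filter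
    (fun x => (univ.filter (fun i => x ∈ R i)).card = d + 1) with hT
  -- j ≤ n
  have hjn : j ≤ n := by
    have h := dc R univ univ
    have h1 : ∑ i : Fin j, ((univ : Finset (Fin n)).filter (fun x => x ∈ R i)).card
        = j * (d + 1) := by
      rw [Finset.sum_congr rfl (fun i _ => ?_), Finset.sum_const, smul_eq_mul, card_univ,
        Fintype.card_fin]
      rw [filter_mem_eq_inter, univ_inter]; exact hcard i
    have h2 : ∑ x : Fin n, ((univ : Finset (Fin j)).filter (fun i => x ∈ R i)).card
        ≤ n * (d + 1) := by
      calc ∑ x : Fin n, ((univ : Finset (Fin j)).filter (fun i => x ∈ R i)).card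
          ≤ ∑ _x : Fin n, (d + 1) := Finset.sum_le_sum fun x _ => hload x
        _ = n * (d + 1) := by simp [mul_comm]
    have : j * (d+1) ≤ n * (d+1) := by omega
    exact Nat.le_of_mul_le_mul_right this (Nat.succ_pos d)
  -- Hall system with dummies
  set G : Fin j ⊕ Fin (n - j) → Finset (Fin n) := Sum.elim R (fun _ => Tᶜ) with hG
  have hall : ∀ S : Finset (Fin j ⊕ Fin (n - j)), S.card ≤ (S.biUnion G).card := by
    intro S
    set S₁ : Finset (Fin j) := univ.filter (fun i => Sum.inl i ∈ S) with hS₁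
    set S₂ : Finset (Fin (n - j)) := univ.filter (fun z => Sum.inr z ∈ S) with hS₂
    have hsplit : S.card ≤ S₁.card + S₂.card := by
      have : S ⊆ S₁.image Sum.inl ∪ S₂.image Sum.inr := by
        intro y hy
        rcases y with i | z
        · exact mem_union_left _ (mem_image_of_mem _ (by simp [hS₁, hy]))
        · exact mem_union_right _ (mem_image_of_mem _ (by simp [hS₂, hy]))
      calc S.card ≤ (S₁.image Sum.inl ∪ S₂.image Sum.inr).card := card_le_card this
        _ ≤ (S₁.image Sum.inl).card + (S₂.image Sum.inr).card := card_union_le _ _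
        _ = S₁.card + S₂.card := by
            rw [card_image_of_injective _ Sum.inl_injective,
              card_image_of_injective _ Sum.inr_injective]
    have hU₁ : S₁.biUnion R ⊆ S.biUnion G := by
      intro x hx
      obtain ⟨i, hi, hxi⟩ := mem_biUnion.mp hx
      exact mem_biUnion.mpr ⟨Sum.inl i, (mem_filter.mp hi).2, hxi⟩
    rcases S₂.eq_empty_or_nonempty with h2e | ⟨z, hz⟩
    · have := hall_rows d R hcard hload S₁
      have := card_le_card hU₁
      rw [h2e] at hsplit
      simp at hsplit
      omega
    · -- Tᶜ is in the union
      have hTc : Tᶜ ⊆ S.biUnion G := by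
        intro x hx
        exact mem_biUnion.mpr ⟨Sum.inr z, (mem_filter.mp hz).2, hx⟩
      set U₁ := S₁.biUnion R with hU₁def
      -- the key claim: (T \ U₁).card + S₁.card ≤ j
      have hclaim : (T \ U₁).card + S₁.card ≤ j := by
        have hcnt : ∑ x ∈ T \ U₁, (S₁ᶜ.filter (fun i => x ∈ R i)).card
            = (T \ U₁).card * (d + 1) := by
          rw [Finset.sum_congr rfl (fun x hx => ?_), Finset.sum_const, smul_eq_mul]
          obtain ⟨hxT, hxU⟩ := mem_sdiff.mp hx
          have hfull : (univ : Finset (Fin j)).filter (fun i => x ∈ R i)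
              = S₁ᶜ.filter (fun i => x ∈ R i) := by
            apply Finset.Subset.antisymm
            · intro i hi
              have hxRi := (mem_filter.mp hi).2
              refine mem_filter.mpr ⟨mem_compl.mpr (fun hiS₁ => ?_), hxRi⟩
              exact hxU (mem_biUnion.mpr ⟨i, hiS₁, hxRi⟩)
            · exact filter_subset_filter _ (subset_univ _)
          rw [← hfull]
          exact (mem_filter.mp hxT).2
        have hdc := dc R S₁ᶜ (T \ U₁)
        have hbd : ∑ i ∈ S₁ᶜ, ((T \ U₁).filter (fun x => x ∈ R i)).card
            ≤ S₁ᶜ.card * (d + 1) := by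
          rw [← smul_eq_mul, ← Finset.sum_const]
          refine Finset.sum_le_sum fun i _ => ?_
          calc ((T \ U₁).filter (fun x => x ∈ R i)).card
              ≤ (R i).card := card_le_card (fun x hx => (mem_filter.mp hx).2)
            _ = d + 1 := hcard i
        have hcc : S₁ᶜ.card = j - S₁.card := by
          rw [card_compl, Fintype.card_fin]
        have hs1j : S₁.card ≤ j := by
          have := card_le_univ S₁; simpa using this
        rw [hcc] at hbd
        have : (T \ U₁).card * (d+1) ≤ (j - S₁.card) * (d+1) := by omega
        have := Nat.le_of_mul_le_mul_right this (Nat.succ_pos d)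
        omega
      have hcomb : Tᶜ ∪ U₁ ⊆ S.biUnion G := union_subset hTc hU₁
      have hcardu : (Tᶜ ∪ U₁).card = Tᶜ.card + (U₁ \ Tᶜ).card := by
        rw [← card_union_of_disjoint disjoint_sdiff, union_sdiff_self_eq_union]
      have hUT : U₁ \ Tᶜ = U₁ ∩ T := by
        ext x; simp [and_comm]
      have hTsplit : (T ∩ U₁).card + (T \ U₁).card = T.card :=
        card_inter_add_card_sdiff T U₁
      have hTn : T.card ≤ n := by simpa using card_le_univ T
      have hTc_card : Tᶜ.card = n - T.card := by rw [card_compl, Fintype.card_fin]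
      have hS2n : S₂.card ≤ n - j := by simpa using card_le_univ S₂
      have hle := card_le_card hcomb
      rw [hcardu, hUT] at hle
      have hIC : (U₁ ∩ T).card = (T ∩ U₁).card := by rw [inter_comm]
      omega
  obtain ⟨g, hginj, hgmem⟩ := (Finset.all_card_le_biUnion_card_iff_exists_injective G).mp hall
  have hgbij : Function.Bijective g := by
    rw [Fintype.bijective_iff_injective_and_card]
    exact ⟨hginj, by simp [Fintype.card_sum]; omega⟩
  refine ⟨fun i => g (Sum.inl i), fun a b hab => ?_, fun i => hgmem (Sum.inl i), fun x hx => ?_⟩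
  · exact Sum.inl_injective (hginj hab)
  · obtain ⟨y, hy⟩ := hgbij.2 x
    rcases y with i | z
    · exact ⟨i, hy⟩
    · exfalso
      have := hgmem (Sum.inr z)
      rw [hG] at this
      simp only [Sum.elim_inr] at this
      rw [hy] at this
      exact (mem_compl.mp this) (mem_filter.mpr ⟨mem_univ x, hx⟩)

private lemma main_ind (d : ℕ) : ∀ {j n : ℕ} (R : Fin j → Finset (Fin n)),
    (∀ i, (R i).card = d) →
    (∀ x, (univ.filter (fun i => x ∈ R i)).card ≤ d) →
    ∃ σ : Fin j → Fin d → Fin n,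
      (∀ i, Function.Injective (σ i)) ∧ (∀ i a, σ i a ∈ R i) ∧
      (∀ i i' : Fin j, i ≠ i' → ∀ a, σ i a ≠ σ i' a) := by
  induction d with
  | zero =>
    intro j n R _ _
    exact ⟨fun _ => Fin.elim0, fun i a => a.elim0, fun i a => a.elim0,
      fun _ _ _ a => a.elim0⟩
  | succ d ih =>
    intro j n R hcard hload
    obtain ⟨f, hfinj, hfmem, hfcov⟩ := exists_matching d R hcard hload
    set R' : Fin j → Finset (Fin n) := fun i => (R i).erase (f i) with hR'
    have hsub : ∀ i, R' i ⊆ R i := fun i => erase_subset _ _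
    have hcard' : ∀ i, (R' i).card = d := by
      intro i
      have : (R' i).card = (R i).card - 1 := card_erase_of_mem (hfmem i)
      rw [this, hcard i]; omega
    have hload' : ∀ x, (univ.filter (fun i => x ∈ R' i)).card ≤ d := by
      intro x
      have hmono : univ.filter (fun i => x ∈ R' i) ⊆ univ.filter (fun i => x ∈ R i) := by
        intro i hi
        exact mem_filter.mpr ⟨mem_univ i, hsub i (mem_filter.mp hi).2⟩
      rcases lt_or_eq_of_le (hload x) with h | h
      · exact le_trans (card_le_card hmono) (by omega)
      · obtain ⟨i₀, hi₀⟩ := hfcov x h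
        have hsub2 : univ.filter (fun i => x ∈ R' i)
            ⊆ (univ.filter (fun i => x ∈ R i)).erase i₀ := by
          intro i hi
          have hx' : x ∈ R' i := (mem_filter.mp hi).2
          refine mem_erase.mpr ⟨?_, mem_filter.mpr ⟨mem_univ i, hsub i hx'⟩⟩
          rintro rfl
          exact (Finset.mem_erase.mp hx').1 hi₀.symm
        have hle2 := card_le_card hsub2
        rw [card_erase_of_mem
          (mem_filter.mpr ⟨mem_univ i₀, by rw [← hi₀]; exact hfmem i₀⟩)] at hle2
        omega
    obtain ⟨σ', h1, h2, h3⟩ := ih R' hcard' hload'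
    refine ⟨fun i => Fin.cases (f i) (σ' i), ?_, ?_, ?_⟩
    · intro i a b hab
      have hne : ∀ c, σ' i c ≠ f i := fun c hc =>
        (Finset.ne_of_mem_erase (h2 i c)) (by rw [hc])
      induction a using Fin.cases with
      | zero =>
        induction b using Fin.cases with
        | zero => rfl
        | succ b =>
          simp only [Fin.cases_zero, Fin.cases_succ] at hab
          exact absurd hab.symm (hne b)
      | succ a =>
        induction b using Fin.cases with
        | zero =>
          simp only [Fin.cases_zero, Fin.cases_succ] at hab
          exact absurd hab (hne a)
        | succ b =>
          simp only [Fin.cases_succ] at hab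
          rw [h1 i hab]
    · intro i a
      induction a using Fin.cases with
      | zero => exact hfmem i
      | succ a => exact hsub i (h2 i a)
    · intro i i' hne a
      induction a using Fin.cases with
      | zero =>
        simp only [Fin.cases_zero]
        exact fun h => hne (hfinj h)
      | succ a =>
        simp only [Fin.cases_succ]
        exact h3 i i' hne a

/-- **Matching lemma.** Let `j ≤ k` be positive integers and `C 1, …, C j ⊆ [n]` be sets of
size `k`. Then, viewing an abstract `k`-set `A` as `Fin k`, there are pairwise disjoint
perfect matchings between `A` and each `C i`; equivalently, there are bijections
`σ i : Fin k → C i` that pairwise disagree everywhere. -/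
theorem statement_4 (j k n : ℕ) (hj : 1 ≤ j) (hjk : j ≤ k)
    (C : Fin j → Finset (Fin n)) (hC : ∀ i, (C i).card = k) :
    ∃ σ : Fin j → Fin k → Fin n,
      (∀ i, Function.Injective (σ i)) ∧
      (∀ i a, σ i a ∈ C i) ∧
      (∀ i i' : Fin j, i ≠ i' → ∀ a : Fin k, σ i a ≠ σ i' a) := by
  exact main_ind k C hC (fun x => le_trans
    (le_trans (card_filter_le _ _) (by simp)) hjk)
end

section
/- Let k be a positive integer, let G be the complete graph on 2k vertices, and let (A_1, B_1), …, (A_k, B_k) be pairs of sets of vertices of G such that for every i ∈ {1, …, k}: (a) k ≥ |A_i| = |B_i| ≥ 2(i − 1), and (b) A_i ∩ B_i = ∅. Then G contains pairwise edge-disjoint matchings M_1, …, M_k such that, for every i, the matching M_i is a perfect matching between A_i and B_i (every edge of M_i has one endpoint in A_i and the other in B_i, and M_i saturates A_i and B_i). -/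
open Finset

/-- In the complete graph on `2k` vertices, given pairs `(A i, B i)` of disjoint vertex
sets with `k ≥ |A i| = |B i| ≥ 2 i` (for `i = 0, …, k - 1`), there are pairwise
edge-disjoint matchings `M i`, where `M i` is a perfect matching between `A i` and `B i`.
The matching `M i` is given by a bijection `σ i` from `A i` to `B i`, its edges being
`s(a, σ i a)` for `a ∈ A i`; edge-disjointness says no edge is used by two matchings. -/
theorem statement_5 (k : ℕ) (hk : 1 ≤ k) (A B : Fin k → Finset (Fin (2 * k)))
    (hcard : ∀ i, (A i).card = (B i).card)
    (hupper : ∀ i, (A i).card ≤ k)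
    (hlower : ∀ i : Fin k, 2 * (i : ℕ) ≤ (A i).card)
    (hdisj : ∀ i, Disjoint (A i) (B i)) :
    ∃ σ : Fin k → Fin (2 * k) → Fin (2 * k),
      (∀ i, Set.BijOn (σ i) ↑(A i) ↑(B i)) ∧
      (∀ i j : Fin k, i ≠ j → ∀ a ∈ A i, ∀ a' ∈ A j, s(a, σ i a) ≠ s(a', σ j a')) := by
  classical
  suffices h : ∀ n, n ≤ k → ∃ σ : Fin k → Fin (2 * k) → Fin (2 * k),
      (∀ i : Fin k, (i : ℕ) < n → Set.BijOn (σ i) ↑(A i) ↑(B i)) ∧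
      (∀ i j : Fin k, (i : ℕ) < n → (j : ℕ) < n → i ≠ j →
        ∀ a ∈ A i, ∀ a' ∈ A j, s(a, σ i a) ≠ s(a', σ j a')) by
    obtain ⟨σ, h1, h2⟩ := h k le_rfl
    exact ⟨σ, fun i => h1 i i.isLt, fun i j hij => h2 i j i.isLt j.isLt hij⟩
  intro n
  induction n with
  | zero =>
    exact fun _ => ⟨fun _ x => x, fun i hi => absurd hi (Nat.not_lt_zero _),
      fun i j hi _ _ => absurd hi (Nat.not_lt_zero _)⟩
  | succ n ih =>
    intro hn
    obtain ⟨σ, hbij, hED⟩ := ih (by omega)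
    set i : Fin k := ⟨n, by omega⟩ with hi_def
    have hiv : (i : ℕ) = n := rfl
    -- edges of earlier matchings incident to a vertex `a`: the set of partners
    set part : Fin k → Fin (2 * k) → Finset (Fin (2 * k)) := fun j a =>
      if a ∈ A j then {σ j a} else (A j).filter (fun a' => σ j a' = a) with hpart_def
    set used : Fin (2 * k) → Finset (Fin (2 * k)) := fun a =>
      (Finset.univ.filter (fun j : Fin k => (j : ℕ) < n)).biUnion (fun j => part j a)
      with hused_def
    have hpart_card : ∀ j : Fin k, (j : ℕ) < n → ∀ a, (part j a).card ≤ 1 := by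
      intro j hj a
      by_cases h : a ∈ A j
      · simp [hpart_def, h]
      · simp only [hpart_def, if_neg h]
        apply Finset.card_le_one.mpr
        intro x hx y hy
        simp only [Finset.mem_filter] at hx hy
        exact (hbij j hj).injOn (Finset.mem_coe.mpr hx.1) (Finset.mem_coe.mpr hy.1)
          (hx.2.trans hy.2.symm)
    have hfiltcard : (Finset.univ.filter (fun j : Fin k => (j : ℕ) < n)).card ≤ n := by
      calc (Finset.univ.filter (fun j : Fin k => (j : ℕ) < n)).card
          = ((Finset.univ.filter (fun j : Fin k => (j : ℕ) < n)).image Fin.val).card :=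
            (Finset.card_image_of_injective _ Fin.val_injective).symm
        _ ≤ (Finset.range n).card := by
            apply Finset.card_le_card
            intro x hx
            simp only [Finset.mem_image, Finset.mem_filter, Finset.mem_univ,
              true_and] at hx
            obtain ⟨j, hj, rfl⟩ := hx
            simpa using hj
        _ = n := Finset.card_range n
    have hused_card : ∀ a, (used a).card ≤ n := by
      intro a
      calc (used a).card
          ≤ ∑ j ∈ Finset.univ.filter (fun j : Fin k => (j : ℕ) < n), (part j a).card :=
            Finset.card_biUnion_le
        _ ≤ ∑ _j ∈ Finset.univ.filter (fun j : Fin k => (j : ℕ) < n), 1 :=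
            Finset.sum_le_sum (fun j hj =>
              hpart_card j (by simpa using (Finset.mem_filter.mp hj).2) a)
        _ = (Finset.univ.filter (fun j : Fin k => (j : ℕ) < n)).card := by
            rw [Finset.sum_const, smul_eq_mul, mul_one]
        _ ≤ n := hfiltcard
    have hm : (A i).card = (B i).card := hcard i
    have h2n : 2 * n ≤ (A i).card := by simpa [hiv] using hlower i
    -- Hall's condition
    set t : ↥(A i) → Finset (Fin (2 * k)) := fun a => B i \ used a.1 with ht_def
    have hall : ∀ S : Finset ↥(A i), S.card ≤ (S.biUnion t).card := by
      intro S
      rcases Nat.eq_zero_or_pos S.card with h0 | hpos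
      · simp [h0]
      by_cases hsmall : S.card ≤ (A i).card - n
      · obtain ⟨a, ha⟩ := Finset.card_pos.mp hpos
        have h1 : (B i).card - (used a.1).card ≤ (t a).card := Finset.le_card_sdiff _ _
        have h2 : (t a).card ≤ (S.biUnion t).card :=
          Finset.card_le_card (Finset.subset_biUnion_of_mem t ha)
        have h3 := hused_card a.1
        omega
      · push_neg at hsmall
        have hSub : B i ⊆ S.biUnion t := by
          intro b hb
          -- for each earlier j, at most one vertex is forbidden partner b via j
          have hcol : ∀ j : Fin k, (j : ℕ) < n →
              (Finset.univ.filter (fun a : Fin (2 * k) => b ∈ part j a)).card ≤ 1 := by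
            intro j hj
            apply Finset.card_le_one.mpr
            intro x hx y hy
            simp only [Finset.mem_filter, Finset.mem_univ, true_and] at hx hy
            have key : ∀ z : Fin (2 * k), b ∈ part j z →
                (z ∈ A j ∧ b = σ j z) ∨ (z ∉ A j ∧ b ∈ A j ∧ σ j b = z) := by
              intro z hz
              by_cases hzA : z ∈ A j
              · left
                refine ⟨hzA, ?_⟩
                simpa [hpart_def, hzA] using hz
              · right
                simp only [hpart_def, if_neg hzA, Finset.mem_filter] at hz
                exact ⟨hzA, hz.1, hz.2⟩
            rcases key x hx with ⟨hx1, hx2⟩ | ⟨hx1, hx2, hx3⟩ <;>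
              rcases key y hy with ⟨hy1, hy2⟩ | ⟨hy1, hy2, hy3⟩
            · exact (hbij j hj).injOn (Finset.mem_coe.mpr hx1) (Finset.mem_coe.mpr hy1)
                (hx2.symm.trans hy2)
            · exfalso
              have hbB : b ∈ B j := by
                have := (hbij j hj).mapsTo (Finset.mem_coe.mpr hx1)
                rw [← hx2] at this
                exact Finset.mem_coe.mp this
              exact (Finset.disjoint_left.mp (hdisj j)) hy2 hbB
            · exfalso
              have hbB : b ∈ B j := by
                have := (hbij j hj).mapsTo (Finset.mem_coe.mpr hy1)
                rw [← hy2] at this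
                exact Finset.mem_coe.mp this
              exact (Finset.disjoint_left.mp (hdisj j)) hx2 hbB
            · exact hx3.symm.trans hy3
          have hbadcard : (S.filter (fun a => b ∈ used a.1)).card ≤ n := by
            calc (S.filter (fun a => b ∈ used a.1)).card
                = ((S.filter (fun a => b ∈ used a.1)).image Subtype.val).card :=
                  (Finset.card_image_of_injective _ Subtype.val_injective).symm
              _ ≤ ((Finset.univ.filter (fun j : Fin k => (j : ℕ) < n)).biUnion
                    (fun j => Finset.univ.filter
                      (fun a : Fin (2 * k) => b ∈ part j a))).card := by
                  apply Finset.card_le_card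
                  intro x hx
                  simp only [Finset.mem_image] at hx
                  obtain ⟨a, ha, rfl⟩ := hx
                  have hbu : b ∈ used a.1 := (Finset.mem_filter.mp ha).2
                  rw [hused_def] at hbu
                  simp only [Finset.mem_biUnion, Finset.mem_filter, Finset.mem_univ,
                    true_and] at hbu ⊢
                  obtain ⟨j, hj1, hj2⟩ := hbu
                  exact ⟨j, hj1, hj2⟩
              _ ≤ ∑ j ∈ Finset.univ.filter (fun j : Fin k => (j : ℕ) < n),
                    (Finset.univ.filter (fun a : Fin (2 * k) => b ∈ part j a)).card :=
                  Finset.card_biUnion_le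
              _ ≤ ∑ _j ∈ Finset.univ.filter (fun j : Fin k => (j : ℕ) < n), 1 :=
                  Finset.sum_le_sum (fun j hj =>
                    hcol j (by simpa using (Finset.mem_filter.mp hj).2))
              _ = (Finset.univ.filter (fun j : Fin k => (j : ℕ) < n)).card := by
                  rw [Finset.sum_const, smul_eq_mul, mul_one]
              _ ≤ n := hfiltcard
          obtain ⟨a, haS, hbu⟩ : ∃ a ∈ S, b ∉ used a.1 := by
            by_contra hcon
            push_neg at hcon
            have heq : S.filter (fun a => b ∈ used a.1) = S :=
              Finset.filter_true_of_mem hcon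
            rw [heq] at hbadcard
            omega
          exact Finset.mem_biUnion.mpr ⟨a, haS, Finset.mem_sdiff.mpr ⟨hb, hbu⟩⟩
        have hcardle : S.card ≤ (A i).card := by
          have h1 := Finset.card_le_univ S
          rwa [Fintype.card_coe] at h1
        calc S.card ≤ (B i).card := by omega
          _ ≤ (S.biUnion t).card := Finset.card_le_card hSub
    obtain ⟨f, hfinj, hft⟩ := (Finset.all_card_le_biUnion_card_iff_exists_injective t).mp hall
    set g : Fin (2 * k) → Fin (2 * k) := fun x => if h : x ∈ A i then f ⟨x, h⟩ else x
      with hg_def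
    have hmaps : ∀ x ∈ A i, g x ∈ B i \ used x := by
      intro x hx
      simp only [hg_def, dif_pos hx]
      exact hft ⟨x, hx⟩
    have hinj : Set.InjOn g ↑(A i) := by
      intro x hx y hy hxy
      have hx' : x ∈ A i := Finset.mem_coe.mp hx
      have hy' : y ∈ A i := Finset.mem_coe.mp hy
      have : f ⟨x, hx'⟩ = f ⟨y, hy'⟩ := by
        simpa [hg_def, dif_pos hx', dif_pos hy'] using hxy
      exact congrArg Subtype.val (hfinj this)
    have himg : (A i).image g = B i := by
      apply Finset.eq_of_subset_of_card_le
      · intro b hb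
        obtain ⟨x, hx, rfl⟩ := Finset.mem_image.mp hb
        exact (Finset.mem_sdiff.mp (hmaps x hx)).1
      · rw [Finset.card_image_of_injOn hinj]
        omega
    have hbij_new : Set.BijOn g ↑(A i) ↑(B i) := by
      refine ⟨?_, hinj, ?_⟩
      · intro x hx
        exact Finset.mem_coe.mpr
          ((Finset.mem_sdiff.mp (hmaps x (Finset.mem_coe.mp hx))).1)
      · intro b hb
        have : b ∈ (A i).image g := himg ▸ Finset.mem_coe.mp hb
        obtain ⟨x, hx, rfl⟩ := Finset.mem_image.mp this
        exact ⟨x, Finset.mem_coe.mpr hx, rfl⟩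
    have hkey : ∀ j : Fin k, (j : ℕ) < n → ∀ a ∈ A i, ∀ a' ∈ A j,
        s(a, g a) ≠ s(a', σ j a') := by
      intro j hj a ha a' ha' heq
      have hga := Finset.mem_sdiff.mp (hmaps a ha)
      have hpartsub : part j a ⊆ used a := by
        rw [hused_def]
        exact Finset.subset_biUnion_of_mem (fun j => part j a)
          (by simp [hj])
      rcases Sym2.eq_iff.mp heq with ⟨h1, h2⟩ | ⟨h1, h2⟩
      · subst h1
        have hmem : g a ∈ part j a := by
          rw [h2]
          simp [hpart_def, ha']
        exact hga.2 (hpartsub hmem)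
      · have hanotA : a ∉ A j := by
          intro hc
          have hab : a ∈ B j := by
            have := (hbij j hj).mapsTo (Finset.mem_coe.mpr ha')
            rw [← h1] at this
            exact Finset.mem_coe.mp this
          exact (Finset.disjoint_left.mp (hdisj j)) hc hab
        have hmem : g a ∈ part j a := by
          rw [h2]
          simp only [hpart_def, if_neg hanotA, Finset.mem_filter]
          exact ⟨ha', h1.symm⟩
        exact hga.2 (hpartsub hmem)
    refine ⟨Function.update σ i g, ?_, ?_⟩
    · intro j hj
      rcases Nat.lt_succ_iff_lt_or_eq.mp hj with h | h
      · have hne : j ≠ i := by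
          intro hc
          rw [hc, hiv] at h
          omega
        rw [Function.update_of_ne hne]
        exact hbij j h
      · have : j = i := Fin.ext (by rw [h, hiv])
        subst this
        rw [Function.update_self]
        exact hbij_new
    · intro p q hp hq hpq a ha a' ha'
      by_cases hpi : p = i
      · subst hpi
        have hqi : q ≠ i := fun hc => hpq hc.symm
        have hq' : (q : ℕ) < n := by
          have : (q : ℕ) ≠ n := fun hc => hqi (Fin.ext (by rw [hc, hiv]))
          omega
        rw [Function.update_self, Function.update_of_ne hqi]
        exact hkey q hq' a ha a' ha'
      · by_cases hqi : q = i
        · subst hqi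
          have hp' : (p : ℕ) < n := by
            have : (p : ℕ) ≠ n := fun hc => hpi (Fin.ext (by rw [hc, hiv]))
            omega
          rw [Function.update_of_ne hpi, Function.update_self]
          intro heq
          exact hkey p hp' a' ha' a ha heq.symm
        · have hp' : (p : ℕ) < n := by
            have : (p : ℕ) ≠ n := fun hc => hpi (Fin.ext (by rw [hc, hiv]))
            omega
          have hq' : (q : ℕ) < n := by
            have : (q : ℕ) ≠ n := fun hc => hqi (Fin.ext (by rw [hc, hiv]))
            omega
          rw [Function.update_of_ne hpi, Function.update_of_ne hqi]
          exact hED p q hp' hq' hpq a ha a' ha'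
end

section
/- Let G be a simple graph with independence number at most 2 such that deleting any edge of G produces a graph with an independent set of size 3 (i.e., G is edge-critical). Let x and y be two non-adjacent vertices of G, let C = N(x) ∩ N(y), let X = V(G) \ N[y] and Y = V(G) \ N[x]. Then for every vertex a ∈ C, neither X ⊆ N(a) nor Y ⊆ N(a); that is, some vertex of X is not adjacent to a and some vertex of Y is not adjacent to a. -/
/-- In an edge-critical graph `G` with independence number at most 2, with non-adjacent
vertices `x, y`, common neighborhood `C = N(x) ∩ N(y)`, `X = V(G) \ N[y]` and
`Y = V(G) \ N[x]`: for every `a ∈ C`, neither `X ⊆ N(a)` nor `Y ⊆ N(a)`. -/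
theorem statement_7 {V : Type*} [Fintype V] (G : SimpleGraph V)
    (hα : Gᶜ.CliqueFree 3)
    (hcrit : ∀ u v : V, G.Adj u v → ∃ w : V, w ≠ u ∧ w ≠ v ∧ ¬ G.Adj w u ∧ ¬ G.Adj w v)
    (x y : V) (hxy : x ≠ y) (hnadj : ¬ G.Adj x y)
    (C X Y : Set V)
    (hC : C = G.neighborSet x ∩ G.neighborSet y)
    (hX : X = Set.univ \ insert y (G.neighborSet y))
    (hY : Y = Set.univ \ insert x (G.neighborSet x))
    (a : V) (ha : a ∈ C) :
    ¬ X ⊆ G.neighborSet a ∧ ¬ Y ⊆ G.neighborSet a := by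
  rw [hC] at ha
  obtain ⟨hax, hay⟩ := ha
  constructor
  · intro hsub
    obtain ⟨w, hwa, hwy, hwna, hwny⟩ := hcrit a y (SimpleGraph.Adj.symm hay)
    have : w ∈ X := by
      rw [hX]
      refine ⟨Set.mem_univ _, ?_⟩
      simp only [Set.mem_insert_iff, SimpleGraph.mem_neighborSet]
      push_neg
      exact ⟨hwy, fun h => hwny h.symm⟩
    exact hwna (hsub this).symm
  · intro hsub
    obtain ⟨w, hwa, hwx, hwna, hwnx⟩ := hcrit a x (SimpleGraph.Adj.symm hax)
    have : w ∈ Y := by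
      rw [hY]
      refine ⟨Set.mem_univ _, ?_⟩
      simp only [Set.mem_insert_iff, SimpleGraph.mem_neighborSet]
      push_neg
      exact ⟨hwx, fun h => hwnx h.symm⟩
    exact hwna (hsub this).symm
end

section
/- Let ℓ be a positive integer and let G be a simple graph on n vertices with independence number at most 2 such that: G is edge-critical, n ≥ 4ℓ − 1, and every pair of non-adjacent vertices of G has at most ℓ − 2 common neighbors. Let x, y be non-adjacent vertices, C = N(x) ∩ N(y), X = V(G) \ N[y], Y = V(G) \ N[x]. For a ∈ C set X_a = X ∩ N(a), X̄_a = X \ N(a), Y_a = Y ∩ N(a), Ȳ_a = Y \ N(a), and let X_C (resp. Y_C) be the set of vertices of X (resp. Y) adjacent to every vertex of C. Then for every a ∈ C: |X_C| ≤ |X_a| ≤ ℓ − 2 and |Y_C| ≤ |Y_a| ≤ ℓ − 2; moreover |X̄_a| ≥ ⌈n/2⌉ − |Y| + 3 and |Ȳ_a| ≥ ⌈n/2⌉ − |X| + 3. -/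
/-- Claim on sizes: in an edge-critical `n`-vertex graph `G` with independence number at
most 2, with `n ≥ 4ℓ - 1` and every non-adjacent pair having at most `ℓ - 2` common
neighbors, for non-adjacent `x, y` with `C = N(x) ∩ N(y)`, `X = V ∖ N[y]`, `Y = V ∖ N[x]`
and, for `a ∈ C`, `X_a = X ∩ N(a)`, `X̄_a = X ∖ N(a)`, `Y_a = Y ∩ N(a)`,
`Ȳ_a = Y ∖ N(a)`, `X_C = {v ∈ X : C ⊆ N(v)}`, `Y_C = {v ∈ Y : C ⊆ N(v)}`:
`|X_C| ≤ |X_a| ≤ ℓ - 2`, `|Y_C| ≤ |Y_a| ≤ ℓ - 2`, `|X̄_a| ≥ ⌈n/2⌉ - |Y| + 3` and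
`|Ȳ_a| ≥ ⌈n/2⌉ - |X| + 3`. -/
theorem statement_8 {V : Type*} [Fintype V] (G : SimpleGraph V) (n ℓ : ℕ)
    (hn : Fintype.card V = n) (hℓ : 1 ≤ ℓ)
    (hα : Gᶜ.CliqueFree 3)
    (hcrit : ∀ u v : V, G.Adj u v → ∃ w : V, w ≠ u ∧ w ≠ v ∧ ¬ G.Adj w u ∧ ¬ G.Adj w v)
    (hsize : 4 * ℓ - 1 ≤ n)
    (hcommon : ∀ u v : V, u ≠ v → ¬ G.Adj u v →
      (((G.neighborSet u ∩ G.neighborSet v).ncard : ℤ)) ≤ (ℓ : ℤ) - 2)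
    (x y : V) (hxy : x ≠ y) (hnadj : ¬ G.Adj x y)
    (C X Y : Set V)
    (hC : C = G.neighborSet x ∩ G.neighborSet y)
    (hX : X = Set.univ \ insert y (G.neighborSet y))
    (hY : Y = Set.univ \ insert x (G.neighborSet x))
    (a : V) (ha : a ∈ C)
    (Xa Xbara Ya Ybara XC YC : Set V)
    (hXa : Xa = X ∩ G.neighborSet a) (hXbara : Xbara = X \ G.neighborSet a)
    (hYa : Ya = Y ∩ G.neighborSet a) (hYbara : Ybara = Y \ G.neighborSet a)
    (hXC : XC = {v ∈ X | C ⊆ G.neighborSet v})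
    (hYC : YC = {v ∈ Y | C ⊆ G.neighborSet v}) :
    XC.ncard ≤ Xa.ncard ∧ (Xa.ncard : ℤ) ≤ (ℓ : ℤ) - 2 ∧
    YC.ncard ≤ Ya.ncard ∧ (Ya.ncard : ℤ) ≤ (ℓ : ℤ) - 2 ∧
    (((n + 1) / 2 : ℕ) : ℤ) - (Y.ncard : ℤ) + 3 ≤ (Xbara.ncard : ℤ) ∧
    (((n + 1) / 2 : ℕ) : ℤ) - (X.ncard : ℤ) + 3 ≤ (Ybara.ncard : ℤ) := by
  -- no independent triple
  have tri : ∀ u v w : V, u ≠ v → u ≠ w → v ≠ w →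
      ¬G.Adj u v → ¬G.Adj u w → ¬G.Adj v w → False := by
    classical
    intro u v w h1 h2 h3 n1 n2 n3
    exact hα {u, v, w} (SimpleGraph.is3Clique_triple_iff.mpr
      ⟨(G.compl_adj _ _).mpr ⟨h1, n1⟩, (G.compl_adj _ _).mpr ⟨h2, n2⟩,
       (G.compl_adj _ _).mpr ⟨h3, n3⟩⟩)
  have haC := ha
  rw [hC, Set.mem_inter_iff, SimpleGraph.mem_neighborSet, SimpleGraph.mem_neighborSet] at haC
  obtain ⟨hax, hay⟩ := haC
  -- XC ⊆ Xa and YC ⊆ Ya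
  have hXCsub : XC ⊆ Xa := by
    intro v hv
    rw [hXC] at hv; rw [hXa]
    exact ⟨hv.1, (hv.2 ha).symm⟩
  have hYCsub : YC ⊆ Ya := by
    intro v hv
    rw [hYC] at hv; rw [hYa]
    exact ⟨hv.1, (hv.2 ha).symm⟩
  -- bound on |Xa|
  have hXaB : (Xa.ncard : ℤ) ≤ (ℓ : ℤ) - 2 := by
    obtain ⟨w, hwy, hwa, hnwy, hnwa⟩ := hcrit y a hay
    have hsub : Xa ⊆ G.neighborSet a ∩ G.neighborSet w := by
      intro v hv
      rw [hXa] at hv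
      obtain ⟨hvX, hva⟩ := hv
      rw [hX] at hvX
      simp only [Set.mem_diff, Set.mem_univ, Set.mem_insert_iff,
        SimpleGraph.mem_neighborSet, true_and, not_or] at hvX
      obtain ⟨hvy, hnyv⟩ := hvX
      refine ⟨hva, SimpleGraph.mem_neighborSet .. |>.mpr ?_⟩
      by_contra hwv
      have hvw : v ≠ w := by
        rintro rfl; exact hnwa ((SimpleGraph.mem_neighborSet ..).mp hva).symm
      exact tri v w y hvw hvy hwy (fun h => hwv h.symm)
        (fun h => hnyv h.symm) hnwy
    calc (Xa.ncard : ℤ) ≤ ((G.neighborSet a ∩ G.neighborSet w).ncard : ℤ) := by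
          exact_mod_cast Set.ncard_le_ncard hsub (Set.toFinite _)
      _ ≤ (ℓ : ℤ) - 2 := hcommon a w (Ne.symm hwa) (fun h => hnwa h.symm)
  -- bound on |Ya|
  have hYaB : (Ya.ncard : ℤ) ≤ (ℓ : ℤ) - 2 := by
    obtain ⟨w, hwx, hwa, hnwx, hnwa⟩ := hcrit x a hax
    have hsub : Ya ⊆ G.neighborSet a ∩ G.neighborSet w := by
      intro v hv
      rw [hYa] at hv
      obtain ⟨hvY, hva⟩ := hv
      rw [hY] at hvY
      simp only [Set.mem_diff, Set.mem_univ, Set.mem_insert_iff,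
        SimpleGraph.mem_neighborSet, true_and, not_or] at hvY
      obtain ⟨hvx, hnxv⟩ := hvY
      refine ⟨hva, SimpleGraph.mem_neighborSet .. |>.mpr ?_⟩
      by_contra hwv
      have hvw : v ≠ w := by
        rintro rfl; exact hnwa ((SimpleGraph.mem_neighborSet ..).mp hva).symm
      exact tri v w x hvw hvx hwx (fun h => hwv h.symm)
        (fun h => hnxv h.symm) hnwx
    calc (Ya.ncard : ℤ) ≤ ((G.neighborSet a ∩ G.neighborSet w).ncard : ℤ) := by
          exact_mod_cast Set.ncard_le_ncard hsub (Set.toFinite _)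
      _ ≤ (ℓ : ℤ) - 2 := hcommon a w (Ne.symm hwa) (fun h => hnwa h.symm)
  -- bound on |C|
  have hCB : (C.ncard : ℤ) ≤ (ℓ : ℤ) - 2 := by
    rw [hC]; exact hcommon x y hxy hnadj
  -- cover: V = C ∪ X ∪ Y
  have hcover : (Set.univ : Set V) ⊆ C ∪ X ∪ Y := by
    intro v _
    rw [hC, hX, hY]
    simp only [Set.mem_union, Set.mem_inter_iff, Set.mem_diff, Set.mem_univ,
      Set.mem_insert_iff, SimpleGraph.mem_neighborSet, true_and, not_or]
    by_cases hy : G.Adj y v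
    · by_cases hx : G.Adj x v
      · exact Or.inl (Or.inl ⟨hx, hy⟩)
      · exact Or.inr ⟨by rintro rfl; exact hnadj hy.symm, hx⟩
    · rcases eq_or_ne v y with rfl | hvy
      · exact Or.inr ⟨fun h => hxy h.symm, fun h => hnadj h⟩
      · exact Or.inl (Or.inr ⟨hvy, hy⟩)
  have hnle : n ≤ C.ncard + X.ncard + Y.ncard := by
    have h1 : (Set.univ : Set V).ncard ≤ (C ∪ X ∪ Y).ncard :=
      Set.ncard_le_ncard hcover (Set.toFinite _)
    have h2 : (C ∪ X ∪ Y).ncard ≤ (C ∪ X).ncard + Y.ncard := Set.ncard_union_le _ _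
    have h3 : (C ∪ X).ncard ≤ C.ncard + X.ncard := Set.ncard_union_le _ _
    have h4 : (Set.univ : Set V).ncard = n := by rw [Set.ncard_univ, Nat.card_eq_fintype_card, hn]
    omega
  -- difference cardinalities
  have hXbd : Xbara.ncard = X.ncard - Xa.ncard ∧ Xa.ncard ≤ X.ncard := by
    have h1 : Xbara = X \ Xa := by
      rw [hXbara, hXa]; ext v; simp only [Set.mem_diff, Set.mem_inter_iff]; tauto
    have h2 : Xa ⊆ X := by rw [hXa]; exact Set.inter_subset_left
    exact ⟨by rw [h1, Set.ncard_diff h2 (Set.toFinite _)],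
      Set.ncard_le_ncard h2 (Set.toFinite _)⟩
  have hYbd : Ybara.ncard = Y.ncard - Ya.ncard ∧ Ya.ncard ≤ Y.ncard := by
    have h1 : Ybara = Y \ Ya := by
      rw [hYbara, hYa]; ext v; simp only [Set.mem_diff, Set.mem_inter_iff]; tauto
    have h2 : Ya ⊆ Y := by rw [hYa]; exact Set.inter_subset_left
    exact ⟨by rw [h1, Set.ncard_diff h2 (Set.toFinite _)],
      Set.ncard_le_ncard h2 (Set.toFinite _)⟩
  refine ⟨Set.ncard_le_ncard hXCsub (Set.toFinite _), hXaB,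
    Set.ncard_le_ncard hYCsub (Set.toFinite _), hYaB, ?_, ?_⟩ <;>
  · obtain ⟨hd1, hd2⟩ := hXbd
    obtain ⟨hd3, hd4⟩ := hYbd
    omega
end

section
/- Let ℓ be a positive integer and let G be a simple graph on n vertices with independence number at most 2 such that: G is edge-critical, n ≥ 4ℓ − 1, and every pair of non-adjacent vertices of G has at most ℓ − 2 common neighbors. Let x, y be non-adjacent vertices, C = N(x) ∩ N(y), X = V(G) \ N[y], Y = V(G) \ N[x], and for a ∈ C set X̄_a = X \ N(a) and Ȳ_a = Y \ N(a). Then for every a ∈ C, either |X \ X̄_a| ≥ 2(ℓ − |Ȳ_a|) or |Y \ Ȳ_a| ≥ 2(ℓ − |X̄_a|). -/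
/-- No independent triple in a graph whose complement is triangle-free. -/
lemma no_indep_triple {V : Type*} (G : SimpleGraph V) (hα : Gᶜ.CliqueFree 3)
    (u v w : V) (h1 : u ≠ v) (h2 : u ≠ w) (h3 : v ≠ w)
    (n1 : ¬ G.Adj u v) (n2 : ¬ G.Adj u w) (n3 : ¬ G.Adj v w) : False := by
  classical
  apply hα {u, v, w}
  rw [SimpleGraph.isNClique_iff]
  constructor
  · simp only [SimpleGraph.isClique_iff, Set.pairwise_insert, Finset.coe_insert,
      Finset.coe_singleton, Set.pairwise_singleton, SimpleGraph.compl_adj,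
      Set.mem_insert_iff, Set.mem_singleton_iff]
    refine ⟨⟨trivial, ?_⟩, ?_⟩ <;> intros z hz <;> rcases hz with rfl | rfl <;>
      simp_all [SimpleGraph.adj_comm, ne_comm, eq_comm]
  · rw [Finset.card_insert_of_notMem (by simp [h1, h2]),
      Finset.card_insert_of_notMem (by simp [h3]), Finset.card_singleton]

/-- Claim: under the standing hypotheses, for every `a ∈ C`, either
`|X ∖ X̄_a| ≥ 2(ℓ - |Ȳ_a|)` or `|Y ∖ Ȳ_a| ≥ 2(ℓ - |X̄_a|)`. -/
theorem statement_9 {V : Type*} [Fintype V] (G : SimpleGraph V) (n ℓ : ℕ)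
    (hn : Fintype.card V = n) (hℓ : 1 ≤ ℓ)
    (hα : Gᶜ.CliqueFree 3)
    (hcrit : ∀ u v : V, G.Adj u v → ∃ w : V, w ≠ u ∧ w ≠ v ∧ ¬ G.Adj w u ∧ ¬ G.Adj w v)
    (hsize : 4 * ℓ - 1 ≤ n)
    (hcommon : ∀ u v : V, u ≠ v → ¬ G.Adj u v →
      (((G.neighborSet u ∩ G.neighborSet v).ncard : ℤ)) ≤ (ℓ : ℤ) - 2)
    (x y : V) (hxy : x ≠ y) (hnadj : ¬ G.Adj x y)
    (C X Y : Set V)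
    (hC : C = G.neighborSet x ∩ G.neighborSet y)
    (hX : X = Set.univ \ insert y (G.neighborSet y))
    (hY : Y = Set.univ \ insert x (G.neighborSet x))
    (a : V) (ha : a ∈ C)
    (Xbara Ybara : Set V)
    (hXbara : Xbara = X \ G.neighborSet a) (hYbara : Ybara = Y \ G.neighborSet a) :
    2 * ((ℓ : ℤ) - (Ybara.ncard : ℤ)) ≤ ((X \ Xbara).ncard : ℤ) ∨
    2 * ((ℓ : ℤ) - (Xbara.ncard : ℤ)) ≤ ((Y \ Ybara).ncard : ℤ) := by
  classical
  -- membership descriptions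
  have hXmem : ∀ v : V, v ∈ X ↔ v ≠ y ∧ ¬ G.Adj y v := by
    intro v; subst hX; simp [Set.mem_diff]
  have hYmem : ∀ v : V, v ∈ Y ↔ v ≠ x ∧ ¬ G.Adj x v := by
    intro v; subst hY; simp [Set.mem_diff]
  have hax : G.Adj x a := by rw [hC] at ha; exact ha.1
  have hay : G.Adj y a := by rw [hC] at ha; exact ha.2
  -- X and Y are cliques
  have hXcl : ∀ u v, u ∈ X → v ∈ X → u ≠ v → G.Adj u v := by
    intro u v hu hv huv
    by_contra hne
    exact no_indep_triple G hα u v y huv ((hXmem u).1 hu).1 ((hXmem v).1 hv).1 hne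
      (fun h => ((hXmem u).1 hu).2 h.symm) (fun h => ((hXmem v).1 hv).2 h.symm)
  have hYcl : ∀ u v, u ∈ Y → v ∈ Y → u ≠ v → G.Adj u v := by
    intro u v hu hv huv
    by_contra hne
    exact no_indep_triple G hα u v x huv ((hYmem u).1 hu).1 ((hYmem v).1 hv).1 hne
      (fun h => ((hYmem u).1 hu).2 h.symm) (fun h => ((hYmem v).1 hv).2 h.symm)
  -- Xbara is nonempty: apply criticality to the edge y–a
  obtain ⟨u, huy, hua, hnuy, hnua⟩ := hcrit y a hay
  have huX : u ∈ Xbara := by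
    rw [hXbara]
    refine ⟨(hXmem u).2 ⟨huy, fun h => hnuy h.symm⟩, fun h => hnua (G.adj_symm h)⟩
  -- Ybara is nonempty: apply criticality to the edge x–a
  obtain ⟨v, hvx, hva, hnvx, hnva⟩ := hcrit x a hax
  have hvY : v ∈ Ybara := by
    rw [hYbara]
    refine ⟨(hYmem v).2 ⟨hvx, fun h => hnvx h.symm⟩, fun h => hnva (G.adj_symm h)⟩
  have huXbar := huX; rw [hXbara] at huXbar
  have hvYbar := hvY; rw [hYbara] at hvYbar
  -- rewrite the difference sets
  have hXdiff : X \ Xbara = X ∩ G.neighborSet a := by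
    rw [hXbara]; ext z; simp [Set.mem_diff]
  have hYdiff : Y \ Ybara = Y ∩ G.neighborSet a := by
    rw [hYbara]; ext z; simp [Set.mem_diff]
  -- |X ∩ N(a)| ≤ ℓ - 2, via the nonadjacent pair (a, u)
  have hXbound : ((X ∩ G.neighborSet a).ncard : ℤ) ≤ (ℓ : ℤ) - 2 := by
    have hau : a ≠ u := by
      rintro rfl; exact ((hXmem _).1 huXbar.1).2 hay
    have hnadjau : ¬ G.Adj a u := fun h => huXbar.2 h
    have hsub : X ∩ G.neighborSet a ⊆ G.neighborSet a ∩ G.neighborSet u := by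
      rintro z ⟨hzX, hza⟩
      refine ⟨hza, ?_⟩
      have hzu : z ≠ u := by rintro rfl; exact huXbar.2 hza
      exact G.adj_symm (hXcl z u hzX huXbar.1 hzu)
    calc ((X ∩ G.neighborSet a).ncard : ℤ)
        ≤ ((G.neighborSet a ∩ G.neighborSet u).ncard : ℤ) := by
          exact_mod_cast Set.ncard_le_ncard hsub (Set.toFinite _)
      _ ≤ (ℓ : ℤ) - 2 := hcommon a u hau hnadjau
  -- |Y ∩ N(a)| ≤ ℓ - 2, via the nonadjacent pair (a, v)
  have hYbound : ((Y ∩ G.neighborSet a).ncard : ℤ) ≤ (ℓ : ℤ) - 2 := by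
    have hav : a ≠ v := by
      rintro rfl; exact ((hYmem _).1 hvYbar.1).2 hax
    have hnadjav : ¬ G.Adj a v := fun h => hvYbar.2 h
    have hsub : Y ∩ G.neighborSet a ⊆ G.neighborSet a ∩ G.neighborSet v := by
      rintro z ⟨hzY, hza⟩
      refine ⟨hza, ?_⟩
      have hzv : z ≠ v := by rintro rfl; exact hvYbar.2 hza
      exact G.adj_symm (hYcl z v hzY hvYbar.1 hzv)
    calc ((Y ∩ G.neighborSet a).ncard : ℤ)
        ≤ ((G.neighborSet a ∩ G.neighborSet v).ncard : ℤ) := by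
          exact_mod_cast Set.ncard_le_ncard hsub (Set.toFinite _)
      _ ≤ (ℓ : ℤ) - 2 := hcommon a v hav hnadjav
  -- |C| ≤ ℓ - 2
  have hCbound : ((C.ncard : ℤ)) ≤ (ℓ : ℤ) - 2 := by
    rw [hC]; exact hcommon x y hxy hnadj
  -- splitting cardinalities
  have hXsplit : X.ncard = (X ∩ G.neighborSet a).ncard + Xbara.ncard := by
    rw [hXbara, ← Set.ncard_inter_add_ncard_diff_eq_ncard X (G.neighborSet a)
      (Set.toFinite _)]
  have hYsplit : Y.ncard = (Y ∩ G.neighborSet a).ncard + Ybara.ncard := by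
    rw [hYbara, ← Set.ncard_inter_add_ncard_diff_eq_ncard Y (G.neighborSet a)
      (Set.toFinite _)]
  -- covering: univ = C ∪ X ∪ Y
  have hcover : (Set.univ : Set V) ⊆ C ∪ X ∪ Y := by
    intro z _
    by_cases hzX : z ∈ X
    · exact Or.inl (Or.inr hzX)
    · by_cases hzY : z ∈ Y
      · exact Or.inr hzY
      · left; left
        have h1 : z = y ∨ G.Adj y z := by
          by_cases h : z = y
          · exact Or.inl h
          · right; by_contra hh; exact hzX ((hXmem z).2 ⟨h, hh⟩)
        have h2 : z = x ∨ G.Adj x z := by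
          by_cases h : z = x
          · exact Or.inl h
          · right; by_contra hh; exact hzY ((hYmem z).2 ⟨h, hh⟩)
        rw [hC]
        rcases h1 with rfl | h1
        · rcases h2 with h2 | h2
          · exact absurd h2 (Ne.symm hxy)
          · exact absurd h2 hnadj
        · rcases h2 with rfl | h2
          · exact absurd (G.adj_symm h1) hnadj
          · exact ⟨h2, h1⟩
  have hcount : (n : ℤ) ≤ (C.ncard : ℤ) + (X.ncard : ℤ) + (Y.ncard : ℤ) := by
    have h1 : (Set.univ : Set V).ncard ≤ (C ∪ X ∪ Y).ncard :=
      Set.ncard_le_ncard hcover (Set.toFinite _)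
    have h2 : (C ∪ X ∪ Y).ncard ≤ C.ncard + X.ncard + Y.ncard :=
      le_trans (Set.ncard_union_le _ _)
        (Nat.add_le_add_right (Set.ncard_union_le _ _) _)
    have h3 : (Set.univ : Set V).ncard = n := by
      rw [Set.ncard_univ, Nat.card_eq_fintype_card, hn]
    push_cast
    omega
  rw [hXdiff, hYdiff]
  have hsize' : 4 * (ℓ : ℤ) - 1 ≤ (n : ℤ) := by
    have : 4 * ℓ - 1 + 1 ≤ n + 1 := by omega
    push_cast at *
    omega
  have hXs : (X.ncard : ℤ) = ((X ∩ G.neighborSet a).ncard : ℤ) + (Xbara.ncard : ℤ) := by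
    exact_mod_cast congrArg (Nat.cast : ℕ → ℤ) hXsplit
  have hYs : (Y.ncard : ℤ) = ((Y ∩ G.neighborSet a).ncard : ℤ) + (Ybara.ncard : ℤ) := by
    exact_mod_cast congrArg (Nat.cast : ℕ → ℤ) hYsplit
  omega
end

section
/- Let ℓ be a positive integer and let G be a simple graph on n vertices with independence number at most 2 such that: G is edge-critical, n ≥ 4ℓ − 1, and every pair of non-adjacent vertices of G has at most ℓ − 2 common neighbors. Let x, y be non-adjacent vertices, C = N(x) ∩ N(y), X = V(G) \ N[y], Y = V(G) \ N[x], and let X̄_C (resp. Ȳ_C) be the set of vertices of X (resp. Y) not adjacent to some vertex of C. Then for every v ∈ X̄_C, |N(v) ∩ Ȳ_C| > ⌈n/2⌉ − |X|, and for every w ∈ Ȳ_C, |N(w) ∩ X̄_C| > ⌈n/2⌉ − |Y|. -/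
private lemma no_indep_triple_s10 {V : Type*} (G : SimpleGraph V) (hα : Gᶜ.CliqueFree 3)
    {a b c : V} (hab : a ≠ b) (hac : a ≠ c) (hbc : b ≠ c)
    (nab : ¬ G.Adj a b) (nac : ¬ G.Adj a c) (nbc : ¬ G.Adj b c) : False := by
  classical
  exact hα {a, b, c} (SimpleGraph.is3Clique_triple_iff.2
    ⟨(SimpleGraph.compl_adj _ _ _).2 ⟨hab, nab⟩, (SimpleGraph.compl_adj _ _ _).2 ⟨hac, nac⟩,
     (SimpleGraph.compl_adj _ _ _).2 ⟨hbc, nbc⟩⟩)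

private lemma aux_half {V : Type*} [Fintype V] (G : SimpleGraph V) (n ℓ : ℕ)
    (hn : Fintype.card V = n) (hℓ : 1 ≤ ℓ)
    (hα : Gᶜ.CliqueFree 3)
    (hcrit : ∀ u v : V, G.Adj u v → ∃ w : V, w ≠ u ∧ w ≠ v ∧ ¬ G.Adj w u ∧ ¬ G.Adj w v)
    (hsize : 4 * ℓ - 1 ≤ n)
    (hcommon : ∀ u v : V, u ≠ v → ¬ G.Adj u v →
      (((G.neighborSet u ∩ G.neighborSet v).ncard : ℤ)) ≤ (ℓ : ℤ) - 2)
    (x y : V) (hxy : x ≠ y) (hnadj : ¬ G.Adj x y)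
    (C X Y : Set V)
    (hC : C = G.neighborSet x ∩ G.neighborSet y)
    (hX : X = Set.univ \ insert y (G.neighborSet y))
    (hY : Y = Set.univ \ insert x (G.neighborSet x))
    (XbarC YbarC : Set V)
    (hXbarC : XbarC = {v ∈ X | ¬ C ⊆ G.neighborSet v})
    (hYbarC : YbarC = {v ∈ Y | ¬ C ⊆ G.neighborSet v}) :
    ∀ v ∈ XbarC,
      (((n + 1) / 2 : ℕ) : ℤ) - (X.ncard : ℤ) < ((G.neighborSet v ∩ YbarC).ncard : ℤ) := by
  intro v hv
  rw [hXbarC] at hv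
  obtain ⟨hvX, hvC⟩ := hv
  -- membership facts about v
  have hvX' := hvX
  rw [hX] at hvX'
  have hvy : v ≠ y ∧ ¬ G.Adj y v := by
    have := hvX'.2
    simp only [Set.mem_insert_iff, SimpleGraph.mem_neighborSet] at this
    push_neg at this
    exact this
  obtain ⟨c, hcC, hcv⟩ := Set.not_subset.1 hvC
  have hcC' := hcC
  rw [hC] at hcC'
  have hcx : G.Adj x c := hcC'.1
  have hcy : G.Adj y c := hcC'.2
  have hvc : ¬ G.Adj v c := fun h => hcv h
  have hvnec : v ≠ c := fun h => hvy.2 (h ▸ hcy)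
  have hvnex : v ≠ x := fun h => hvc (h ▸ hcx)
  -- v ∉ Y
  have hvnY : v ∉ Y := by
    rw [hY]
    intro hmem
    have hvx : ¬ G.Adj x v := by
      have := hmem.2
      simp only [Set.mem_insert_iff, SimpleGraph.mem_neighborSet] at this
      push_neg at this
      exact this.2
    exact no_indep_triple_s10 G hα hvnex hvy.1 hxy
      (fun h => hvx h.symm) (fun h => hvy.2 h.symm) hnadj
  -- get z from edge-criticality on edge x c
  obtain ⟨z, hzx, hzc, hzax, hzac⟩ := hcrit x c hcx
  -- N(c) ∩ Y ⊆ N(z) ∩ N(c)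
  have hsub1 : G.neighborSet c ∩ Y ⊆ G.neighborSet z ∩ G.neighborSet c := by
    rintro u ⟨huc, huY⟩
    rw [hY] at huY
    have hux : u ≠ x ∧ ¬ G.Adj x u := by
      have := huY.2
      simp only [Set.mem_insert_iff, SimpleGraph.mem_neighborSet] at this
      push_neg at this
      exact this
    have huz : u ≠ z := by
      intro h; exact hzac (h ▸ (SimpleGraph.mem_neighborSet G c u).1 huc).symm
    have : G.Adj z u := by
      by_contra hzu
      exact no_indep_triple_s10 G hα huz hux.1 hzx
        (fun h => hzu h.symm) (fun h => hux.2 h.symm) hzax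
    exact ⟨this, huc⟩
  have hb : ((G.neighborSet c ∩ Y).ncard : ℤ) ≤ (ℓ : ℤ) - 2 := by
    refine le_trans ?_ (hcommon z c hzc hzac)
    exact_mod_cast Set.ncard_le_ncard hsub1 (Set.toFinite _)
  -- Y \ N(c) ⊆ N(v) ∩ YbarC
  have hsub2 : Y \ G.neighborSet c ⊆ G.neighborSet v ∩ YbarC := by
    rintro w ⟨hwY, hwc⟩
    have hwY' := hwY
    rw [hY] at hwY'
    have hwx : w ≠ x ∧ ¬ G.Adj x w := by
      have := hwY'.2
      simp only [Set.mem_insert_iff, SimpleGraph.mem_neighborSet] at this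
      push_neg at this
      exact this
    have hwnec : w ≠ c := fun h => hwx.2 (h ▸ hcx)
    have hwnev : w ≠ v := fun h => hvnY (h ▸ hwY)
    have hcw : ¬ G.Adj c w := fun h => hwc ((SimpleGraph.mem_neighborSet G c w).2 h)
    have hvw : G.Adj v w := by
      by_contra hvw
      exact no_indep_triple_s10 G hα hwnev hwnec hvnec
        (fun h => hvw h.symm) (fun h => hcw h.symm) hvc
    refine ⟨hvw, ?_⟩
    rw [hYbarC]
    exact ⟨hwY, fun hsub => hcw ((SimpleGraph.mem_neighborSet G w c).1 (hsub hcC)).symm⟩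
  have hi : Y.ncard ≤ (G.neighborSet v ∩ YbarC).ncard + (G.neighborSet c ∩ Y).ncard := by
    have h1 : (Y ∩ G.neighborSet c).ncard + (Y \ G.neighborSet c).ncard = Y.ncard :=
      Set.ncard_inter_add_ncard_diff_eq_ncard Y (G.neighborSet c) (Set.toFinite _)
    have h2 : (Y \ G.neighborSet c).ncard ≤ (G.neighborSet v ∩ YbarC).ncard :=
      Set.ncard_le_ncard hsub2 (Set.toFinite _)
    have h3 : (Y ∩ G.neighborSet c).ncard = (G.neighborSet c ∩ Y).ncard := by
      rw [Set.inter_comm]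
    omega
  -- cover: univ ⊆ X ∪ Y ∪ C
  have hcov : (Set.univ : Set V) ⊆ X ∪ Y ∪ C := by
    intro u _
    by_cases hux : G.Adj x u
    · by_cases huy : G.Adj y u
      · exact Or.inr (by rw [hC]; exact ⟨hux, huy⟩)
      · left; left
        rw [hX]
        refine ⟨trivial, ?_⟩
        simp only [Set.mem_insert_iff, SimpleGraph.mem_neighborSet]
        push_neg
        exact ⟨fun h => hnadj (h ▸ hux), huy⟩
    · by_cases huex : u = x
      · left; left
        rw [hX]
        refine ⟨trivial, ?_⟩
        simp only [Set.mem_insert_iff, SimpleGraph.mem_neighborSet]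
        push_neg
        exact ⟨huex ▸ hxy, huex ▸ fun h => hnadj h.symm⟩
      · left; right
        rw [hY]
        refine ⟨trivial, ?_⟩
        simp only [Set.mem_insert_iff, SimpleGraph.mem_neighborSet]
        push_neg
        exact ⟨huex, hux⟩
  have hiv : n ≤ X.ncard + Y.ncard + C.ncard := by
    have h0 : (Set.univ : Set V).ncard = n := by
      rw [Set.ncard_univ, Nat.card_eq_fintype_card, hn]
    have h1 : (Set.univ : Set V).ncard ≤ (X ∪ Y ∪ C).ncard :=
      Set.ncard_le_ncard hcov (Set.toFinite _)
    have h2 : (X ∪ Y ∪ C).ncard ≤ (X ∪ Y).ncard + C.ncard := Set.ncard_union_le _ _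
    have h3 : (X ∪ Y).ncard ≤ X.ncard + Y.ncard := Set.ncard_union_le _ _
    omega
  have hC2 : ((C.ncard : ℤ)) ≤ (ℓ : ℤ) - 2 := by
    rw [hC]; exact hcommon x y hxy hnadj
  omega

/-- Claim: under the standing hypotheses, every `v ∈ X̄_C` satisfies
`|N(v) ∩ Ȳ_C| > ⌈n/2⌉ - |X|` and every `w ∈ Ȳ_C` satisfies
`|N(w) ∩ X̄_C| > ⌈n/2⌉ - |Y|`. -/
theorem statement_10 {V : Type*} [Fintype V] (G : SimpleGraph V) (n ℓ : ℕ)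
    (hn : Fintype.card V = n) (hℓ : 1 ≤ ℓ)
    (hα : Gᶜ.CliqueFree 3)
    (hcrit : ∀ u v : V, G.Adj u v → ∃ w : V, w ≠ u ∧ w ≠ v ∧ ¬ G.Adj w u ∧ ¬ G.Adj w v)
    (hsize : 4 * ℓ - 1 ≤ n)
    (hcommon : ∀ u v : V, u ≠ v → ¬ G.Adj u v →
      (((G.neighborSet u ∩ G.neighborSet v).ncard : ℤ)) ≤ (ℓ : ℤ) - 2)
    (x y : V) (hxy : x ≠ y) (hnadj : ¬ G.Adj x y)
    (C X Y : Set V)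
    (hC : C = G.neighborSet x ∩ G.neighborSet y)
    (hX : X = Set.univ \ insert y (G.neighborSet y))
    (hY : Y = Set.univ \ insert x (G.neighborSet x))
    (XbarC YbarC : Set V)
    (hXbarC : XbarC = {v ∈ X | ¬ C ⊆ G.neighborSet v})
    (hYbarC : YbarC = {v ∈ Y | ¬ C ⊆ G.neighborSet v}) :
    (∀ v ∈ XbarC,
      (((n + 1) / 2 : ℕ) : ℤ) - (X.ncard : ℤ) < ((G.neighborSet v ∩ YbarC).ncard : ℤ)) ∧
    (∀ w ∈ YbarC,
      (((n + 1) / 2 : ℕ) : ℤ) - (Y.ncard : ℤ) < ((G.neighborSet w ∩ XbarC).ncard : ℤ)) := by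
  constructor
  · exact aux_half G n ℓ hn hℓ hα hcrit hsize hcommon x y hxy hnadj C X Y hC hX hY
      XbarC YbarC hXbarC hYbarC
  · exact aux_half G n ℓ hn hℓ hα hcrit hsize hcommon y x hxy.symm
      (fun h => hnadj h.symm) C Y X (by rw [hC, Set.inter_comm]) hY hX
      YbarC XbarC hYbarC hXbarC
end

section
/- Let ℓ be a positive integer and let G be a simple graph on n vertices with independence number at most 2 such that: G is edge-critical, n ≥ 4ℓ − 1, and every pair of non-adjacent vertices of G has at most ℓ − 2 common neighbors. Let x, y be non-adjacent vertices, C = N(x) ∩ N(y), X = V(G) \ N[y], Y = V(G) \ N[x]; for a ∈ C set X̄_a = X \ N(a) and Ȳ_a = Y \ N(a); let X_C (resp. Y_C) be the set of vertices of X (resp. Y) adjacent to all of C, and X̄_C = X \ X_C, Ȳ_C = Y \ Y_C. Then for every a ∈ C: (i) if |X̄_C| < ℓ, then |X_C| > ⌈n/2⌉ − ℓ − |Ȳ_a| ≥ ℓ − |Ȳ_a|; and (ii) if |Ȳ_C| < ℓ, then |Y_C| > ⌈n/2⌉ − ℓ − |X̄_a| ≥ ℓ − |X̄_a|. -/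
lemma aux_stmt11 {V : Type*} [Fintype V] (G : SimpleGraph V) (n ℓ : ℕ)
    (hn : Fintype.card V = n) (hℓ : 1 ≤ ℓ)
    (hα : Gᶜ.CliqueFree 3)
    (hcrit : ∀ u v : V, G.Adj u v → ∃ w : V, w ≠ u ∧ w ≠ v ∧ ¬ G.Adj w u ∧ ¬ G.Adj w v)
    (hsize : 4 * ℓ - 1 ≤ n)
    (hcommon : ∀ u v : V, u ≠ v → ¬ G.Adj u v →
      (((G.neighborSet u ∩ G.neighborSet v).ncard : ℤ)) ≤ (ℓ : ℤ) - 2)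
    (x y : V) (hxy : x ≠ y) (hnadj : ¬ G.Adj x y)
    (C X Y : Set V)
    (hC : C = G.neighborSet x ∩ G.neighborSet y)
    (hX : X = Set.univ \ insert y (G.neighborSet y))
    (hY : Y = Set.univ \ insert x (G.neighborSet x))
    (a : V) (ha : a ∈ C)
    (Ybara XC XbarC : Set V)
    (hYbara : Ybara = Y \ G.neighborSet a)
    (hXC : XC = {v ∈ X | C ⊆ G.neighborSet v}) (hXbarC : XbarC = X \ XC) :
    XbarC.ncard < ℓ →
      (((n + 1) / 2 : ℕ) : ℤ) - (ℓ : ℤ) - (Ybara.ncard : ℤ) < (XC.ncard : ℤ) ∧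
      (ℓ : ℤ) - (Ybara.ncard : ℤ) ≤ (((n + 1) / 2 : ℕ) : ℤ) - (ℓ : ℤ) - (Ybara.ncard : ℤ) := by
  intro hlt
  -- complement-triangle helper
  have tri : ∀ u v t : V, u ≠ v → u ≠ t → v ≠ t →
      ¬G.Adj u v → ¬G.Adj u t → ¬G.Adj v t → False := by
    intro u v t h1 h2 h3 n1 n2 n3
    classical
    exact hα {u, v, t} (SimpleGraph.is3Clique_triple_iff.2
      ⟨(G.compl_adj u v).2 ⟨h1, n1⟩, (G.compl_adj u t).2 ⟨h2, n2⟩, (G.compl_adj v t).2 ⟨h3, n3⟩⟩)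
  have hax : G.Adj x a := by rw [hC] at ha; exact ha.1
  have hay : G.Adj y a := by rw [hC] at ha; exact ha.2
  -- membership characterizations
  have memX : ∀ v, v ∈ X ↔ (v ≠ y ∧ ¬ G.Adj y v) := by
    intro v
    rw [hX]
    simp only [Set.mem_diff, Set.mem_univ, true_and, Set.mem_insert_iff,
      SimpleGraph.mem_neighborSet]
    tauto
  have memY : ∀ v, v ∈ Y ↔ (v ≠ x ∧ ¬ G.Adj x v) := by
    intro v
    rw [hY]
    simp only [Set.mem_diff, Set.mem_univ, true_and, Set.mem_insert_iff,
      SimpleGraph.mem_neighborSet]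
    tauto
  -- the critical vertex for edge a x
  obtain ⟨w, hwa, hwx, hnwa, hnwx⟩ := hcrit a x hax.symm
  have hwY : w ∈ Y := (memY w).2 ⟨hwx, fun h => hnwx h.symm⟩
  -- Y ∩ N(a) ⊆ N(a) ∩ N(w)
  have hsub : Y ∩ G.neighborSet a ⊆ G.neighborSet a ∩ G.neighborSet w := by
    rintro v ⟨hvY, hva⟩
    refine ⟨hva, ?_⟩
    have hvax : G.Adj a v := hva
    have hvw : v ≠ w := by
      rintro rfl
      exact hnwa hvax.symm
    have hvx := (memY v).1 hvY
    by_contra hnvw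
    exact tri x v w hvx.1.symm (Ne.symm hwx) hvw hvx.2 (fun h => hnwx h.symm)
      (fun h => hnvw (SimpleGraph.mem_neighborSet G w v |>.2 h.symm))
  have i2 : ((Y ∩ G.neighborSet a).ncard : ℤ) ≤ (ℓ : ℤ) - 2 := by
    have h1 : (Y ∩ G.neighborSet a).ncard ≤ (G.neighborSet a ∩ G.neighborSet w).ncard :=
      Set.ncard_le_ncard hsub (Set.toFinite _)
    have h2 := hcommon a w (Ne.symm hwa) (fun h => hnwa h.symm)
    exact le_trans (by exact_mod_cast h1) h2
  have i1 : ((C).ncard : ℤ) ≤ (ℓ : ℤ) - 2 := by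
    have := hcommon x y hxy hnadj
    rwa [← hC] at this
  -- partition of V
  have hXY : Disjoint X Y := by
    rw [Set.disjoint_left]
    intro v hvX hvY
    have h1 := (memX v).1 hvX
    have h2 := (memY v).1 hvY
    exact tri x y v hxy h2.1.symm h1.1.symm hnadj h2.2 h1.2
  have hXYC : Disjoint (X ∪ Y) C := by
    rw [Set.disjoint_left]
    rintro v (hv | hv) hvC <;> rw [hC] at hvC
    · exact ((memX v).1 hv).2 hvC.2
    · exact ((memY v).1 hv).2 hvC.1
  have hun : X ∪ Y ∪ C = Set.univ := by
    ext v
    simp only [Set.mem_union, Set.mem_univ, iff_true]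
    by_cases hvX : v ∈ X
    · exact Or.inl (Or.inl hvX)
    by_cases hvY : v ∈ Y
    · exact Or.inl (Or.inr hvY)
    right
    rw [memX] at hvX; rw [memY] at hvY
    push_neg at hvX hvY
    rw [hC]
    by_cases h1 : v = y
    · subst h1
      rcases Classical.em (v = x) with h | h
      · exact absurd h.symm hxy
      · exact absurd (hvY h) hnadj
    by_cases h2 : v = x
    · subst h2
      exact absurd ((hvX h1).symm) hnadj
    exact ⟨hvY h2, hvX h1⟩
  have e1 : X.ncard + Y.ncard + C.ncard = n := by
    rw [← Set.ncard_union_eq hXY (Set.toFinite _) (Set.toFinite _),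
      ← Set.ncard_union_eq hXYC (Set.toFinite _) (Set.toFinite _), hun, Set.ncard_univ, Nat.card_eq_fintype_card, hn]
  have e2 : (Y ∩ G.neighborSet a).ncard + Ybara.ncard = Y.ncard := by
    rw [hYbara]
    exact Set.ncard_inter_add_ncard_diff_eq_ncard Y (G.neighborSet a) (Set.toFinite _)
  have e3 : XC.ncard + XbarC.ncard = X.ncard := by
    have hs : XC ⊆ X := by rw [hXC]; exact Set.sep_subset _ _
    have := Set.ncard_inter_add_ncard_diff_eq_ncard X XC (Set.toFinite _)
    rwa [Set.inter_eq_self_of_subset_right hs, ← hXbarC] at this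
  constructor <;> omega

/-- Claim: under the standing hypotheses, for every `a ∈ C`:
(i) if `|X̄_C| < ℓ` then `|X_C| > ⌈n/2⌉ - ℓ - |Ȳ_a| ≥ ℓ - |Ȳ_a|`; and
(ii) if `|Ȳ_C| < ℓ` then `|Y_C| > ⌈n/2⌉ - ℓ - |X̄_a| ≥ ℓ - |X̄_a|`. -/
theorem statement_11 {V : Type*} [Fintype V] (G : SimpleGraph V) (n ℓ : ℕ)
    (hn : Fintype.card V = n) (hℓ : 1 ≤ ℓ)
    (hα : Gᶜ.CliqueFree 3)
    (hcrit : ∀ u v : V, G.Adj u v → ∃ w : V, w ≠ u ∧ w ≠ v ∧ ¬ G.Adj w u ∧ ¬ G.Adj w v)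
    (hsize : 4 * ℓ - 1 ≤ n)
    (hcommon : ∀ u v : V, u ≠ v → ¬ G.Adj u v →
      (((G.neighborSet u ∩ G.neighborSet v).ncard : ℤ)) ≤ (ℓ : ℤ) - 2)
    (x y : V) (hxy : x ≠ y) (hnadj : ¬ G.Adj x y)
    (C X Y : Set V)
    (hC : C = G.neighborSet x ∩ G.neighborSet y)
    (hX : X = Set.univ \ insert y (G.neighborSet y))
    (hY : Y = Set.univ \ insert x (G.neighborSet x))
    (a : V) (ha : a ∈ C)
    (Xbara Ybara XC XbarC YC YbarC : Set V)
    (hXbara : Xbara = X \ G.neighborSet a) (hYbara : Ybara = Y \ G.neighborSet a)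
    (hXC : XC = {v ∈ X | C ⊆ G.neighborSet v}) (hXbarC : XbarC = X \ XC)
    (hYC : YC = {v ∈ Y | C ⊆ G.neighborSet v}) (hYbarC : YbarC = Y \ YC) :
    (XbarC.ncard < ℓ →
      (((n + 1) / 2 : ℕ) : ℤ) - (ℓ : ℤ) - (Ybara.ncard : ℤ) < (XC.ncard : ℤ) ∧
      (ℓ : ℤ) - (Ybara.ncard : ℤ) ≤ (((n + 1) / 2 : ℕ) : ℤ) - (ℓ : ℤ) - (Ybara.ncard : ℤ)) ∧
    (YbarC.ncard < ℓ →
      (((n + 1) / 2 : ℕ) : ℤ) - (ℓ : ℤ) - (Xbara.ncard : ℤ) < (YC.ncard : ℤ) ∧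
      (ℓ : ℤ) - (Xbara.ncard : ℤ) ≤ (((n + 1) / 2 : ℕ) : ℤ) - (ℓ : ℤ) - (Xbara.ncard : ℤ)) := by
  constructor
  · exact aux_stmt11 G n ℓ hn hℓ hα hcrit hsize hcommon x y hxy hnadj C X Y hC hX hY a ha
      Ybara XC XbarC hYbara hXC hXbarC
  · exact aux_stmt11 G n ℓ hn hℓ hα hcrit hsize hcommon y x hxy.symm
      (fun h => hnadj h.symm) C Y X (by rw [hC, Set.inter_comm]) hY hX a ha
      Xbara YC YbarC hXbara hYC hYbarC
end

section
/- Let G be a simple graph on n vertices with independence number at most 2, let ℓ be a positive integer with ℓ ≤ ⌈n/2⌉ − 1, and let x and y be two non-adjacent vertices of G having at least ℓ − 1 common neighbors. If the graph G − x − y (obtained from G by deleting x and y) contains an immersion of K_{ℓ, ⌈n/2⌉ − 1 − ℓ}, then G contains an immersion of K_{ℓ, ⌈n/2⌉ − ℓ}. -/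
open SimpleGraph



lemma list_disjoint_singletons {α : Type*} {a b : α} (h : a ≠ b) :
    List.Disjoint [a] [b] := by
  intro e he he'
  simp_all

set_option maxHeartbeats 1600000 in
lemma star_paths {V : Type*} [Fintype V] [DecidableEq V] (G : SimpleGraph V)
    (hα : Gᶜ.CliqueFree 3) {ℓ : ℕ}
    (x y : V) (hxy : x ≠ y) (hnadj : ¬ G.Adj x y)
    (hcommon : ℓ - 1 ≤ (G.neighborSet x ∩ G.neighborSet y).ncard)
    (a : Fin ℓ → V) (ha_inj : Function.Injective a)
    (hax : ∀ i, a i ≠ x) (hay : ∀ i, a i ≠ y) :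
    ∃ z : V, (z = x ∨ z = y) ∧ ∃ R : ∀ i : Fin ℓ, G.Walk z (a i),
      (∀ i, (R i).IsPath) ∧
      (∀ i, ∀ e ∈ (R i).edges, x ∈ e ∨ y ∈ e) ∧
      (∀ i j, i ≠ j → List.Disjoint (R i).edges (R j).edges) := by
  classical
  have hdichot : ∀ i, G.Adj x (a i) ∨ G.Adj y (a i) := by
    intro i
    by_contra h
    push_neg at h
    exact hα {x, y, a i} (SimpleGraph.is3Clique_triple_iff.2
      ⟨⟨hxy, hnadj⟩, ⟨(hax i).symm, h.1⟩, ⟨(hay i).symm, h.2⟩⟩)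
  by_cases hall : ∀ i, G.Adj x (a i)
  · refine ⟨x, Or.inl rfl, fun i => Walk.cons (hall i) Walk.nil, ?_, ?_, ?_⟩
    · intro i
      simp [Walk.cons_isPath_iff, (hax i).symm]
    · intro i e he
      simp only [Walk.edges_cons, Walk.edges_nil, List.mem_singleton] at he
      subst he
      simp
    · intro i j hij
      simp only [Walk.edges_cons, Walk.edges_nil]
      refine list_disjoint_singletons ?_
      intro heq
      rcases Sym2.eq_iff.mp heq with ⟨-, h2⟩ | ⟨h1, h2⟩
      · exact hij (ha_inj h2)
      · exact hax j h1.symm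
  · push_neg at hall
    obtain ⟨i₀, hi₀⟩ := hall
    have hyi₀ : G.Adj y (a i₀) := (hdichot i₀).resolve_left hi₀
    set T : Finset (Fin ℓ) := Finset.univ.filter (fun i => ¬ G.Adj y (a i)) with hT
    set Rs : Finset (Fin ℓ) := Finset.univ.filter
      (fun i => G.Adj x (a i) ∧ G.Adj y (a i)) with hRs
    have hTR : Disjoint T Rs := by
      rw [Finset.disjoint_left]
      intro i hiT hiRs
      rw [hT, Finset.mem_filter] at hiT
      rw [hRs, Finset.mem_filter] at hiRs
      exact hiT.2 hiRs.2.2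
    have hsub : T ∪ Rs ⊆ Finset.univ.erase i₀ := by
      intro i hi
      rw [Finset.mem_erase]
      refine ⟨?_, Finset.mem_univ _⟩
      rintro rfl
      rw [Finset.mem_union, hT, hRs, Finset.mem_filter, Finset.mem_filter] at hi
      rcases hi with h | h
      · exact h.2 hyi₀
      · exact hi₀ h.2.1
    have hcardTR : T.card + Rs.card ≤ ℓ - 1 := by
      have h1 := Finset.card_le_card hsub
      rw [Finset.card_union_of_disjoint hTR] at h1
      have h2 : (Finset.univ.erase i₀).card = ℓ - 1 := by
        rw [Finset.card_erase_of_mem (Finset.mem_univ _)]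
        simp
      omega
    set C : Finset V := (G.neighborSet x ∩ G.neighborSet y).toFinset \ Rs.image a with hC
    have hCcard : T.card ≤ C.card := by
      have h1 : ((G.neighborSet x ∩ G.neighborSet y).toFinset).card
          ≤ C.card + (Rs.image a).card := by
        rw [hC]; exact Finset.card_le_card_sdiff_add_card
      have h2 : (Rs.image a).card ≤ Rs.card := Finset.card_image_le
      have h3 : ℓ - 1 ≤ ((G.neighborSet x ∩ G.neighborSet y).toFinset).card := by
        rwa [← Set.ncard_eq_toFinset_card']
      omega
    obtain ⟨c₀⟩ : Nonempty ({i // i ∈ T} ↪ {v // v ∈ C}) :=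
      Function.Embedding.nonempty_of_card_le
        (by simpa [Fintype.card_coe] using hCcard)
    set cf : {i // i ∈ T} → V := fun t => ↑(c₀ t) with hcf
    have hcinj : ∀ t t', cf t = cf t' → t = t' := by
      intro t t' h
      exact c₀.injective (Subtype.ext h)
    have hcC : ∀ t : {i // i ∈ T}, cf t ∈ (G.neighborSet x ∩ G.neighborSet y).toFinset \ Rs.image a :=
      fun t => (c₀ t).2
    have hcx : ∀ t, G.Adj x (cf t) := by
      intro t
      have h2 := (Finset.mem_sdiff.mp (hcC t)).1
      rw [Set.mem_toFinset] at h2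
      exact h2.1
    have hcy : ∀ t, G.Adj y (cf t) := by
      intro t
      have h2 := (Finset.mem_sdiff.mp (hcC t)).1
      rw [Set.mem_toFinset] at h2
      exact h2.2
    have hca : ∀ t j, cf t ≠ a j := by
      intro t j heq
      have h2 := (Finset.mem_sdiff.mp (hcC t)).2
      refine h2 (Finset.mem_image.mpr ⟨j, ?_, heq.symm⟩)
      rw [hRs, Finset.mem_filter]
      refine ⟨Finset.mem_univ _, ?_, ?_⟩
      · rw [← heq]; exact hcx t
      · rw [← heq]; exact hcy t
    have hxa : ∀ i, ¬ G.Adj y (a i) → G.Adj x (a i) := fun i h => (hdichot i).resolve_right h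
    have hmemT : ∀ i, ¬ G.Adj y (a i) → i ∈ T := by
      intro i h
      rw [hT, Finset.mem_filter]
      exact ⟨Finset.mem_univ _, h⟩
    refine ⟨y, Or.inr rfl, fun i =>
      if h : G.Adj y (a i) then Walk.cons h Walk.nil
      else Walk.cons (hcy ⟨i, hmemT i h⟩)
        (Walk.cons (hcx ⟨i, hmemT i h⟩).symm (Walk.cons (hxa i h) Walk.nil)), ?_, ?_, ?_⟩
    · -- IsPath
      intro i
      beta_reduce
      by_cases h : G.Adj y (a i)
      · rw [dif_pos h]
        simp [Walk.cons_isPath_iff, (hay i).symm]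
      · rw [dif_neg h]
        have t := (⟨i, hmemT i h⟩ : {i // i ∈ T})
        have h1 : y ≠ cf ⟨i, hmemT i h⟩ := (hcy _).ne
        have h2 : cf ⟨i, hmemT i h⟩ ≠ x := (hcx _).ne'
        have h3 : cf ⟨i, hmemT i h⟩ ≠ a i := hca _ i
        have h4 : x ≠ a i := (hxa i h).ne
        have h5 : y ≠ a i := (hay i).symm
        simp only [Walk.cons_isPath_iff, Walk.isPath_iff_eq_nil, Walk.support_cons,
          Walk.support_nil, List.mem_cons, List.mem_singleton, List.not_mem_nil, or_false]
        refine ⟨⟨⟨trivial, ?_⟩, ?_⟩, ?_⟩ <;> tauto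
    · -- star incidence
      intro i e he
      beta_reduce at he
      by_cases h : G.Adj y (a i)
      · rw [dif_pos h] at he
        simp only [Walk.edges_cons, Walk.edges_nil, List.mem_singleton] at he
        subst he
        right
        simp
      · rw [dif_neg h] at he
        simp only [Walk.edges_cons, Walk.edges_nil, List.mem_cons, List.mem_singleton,
          List.not_mem_nil, or_false] at he
        rcases he with rfl | rfl | rfl
        · right; simp
        · left; simp
        · left; simp
    · -- disjointness
      intro i j hij
      beta_reduce
      have naa : a i ≠ a j := fun h => hij (ha_inj h)
      have naa' : a j ≠ a i := naa.symm
      have nyx : y ≠ x := hxy.symm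
      have nxy : x ≠ y := hxy
      have nay : a i ≠ y := hay i
      have nya : y ≠ a i := (hay i).symm
      have nay' : a j ≠ y := hay j
      have nya' : y ≠ a j := (hay j).symm
      have nax : a i ≠ x := hax i
      have nxa : x ≠ a i := (hax i).symm
      have nax' : a j ≠ x := hax j
      have nxa' : x ≠ a j := (hax j).symm
      by_cases hi : G.Adj y (a i) <;> by_cases hj' : G.Adj y (a j)
      · rw [dif_pos hi, dif_pos hj']
        intro e he he'
        simp only [Walk.edges_cons, Walk.edges_nil, List.mem_cons, List.not_mem_nil,
          or_false, List.mem_singleton] at he he'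
        subst he
        simp only [Sym2.eq_iff] at he'
        tauto
      · rw [dif_pos hi, dif_neg hj']
        set tj : {i // i ∈ T} := ⟨j, hmemT j hj'⟩ with htj
        have m1 : y ≠ cf tj := (hcy tj).ne
        have m1' : cf tj ≠ y := m1.symm
        have m2 : x ≠ cf tj := (hcx tj).ne
        have m2' : cf tj ≠ x := m2.symm
        have m3 : cf tj ≠ a i := hca tj i
        have m3' : a i ≠ cf tj := m3.symm
        intro e he he'
        simp only [Walk.edges_cons, Walk.edges_nil, List.mem_cons, List.not_mem_nil,
          or_false, List.mem_singleton] at he he'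
        subst he
        simp only [Sym2.eq_iff] at he'
        tauto
      · rw [dif_neg hi, dif_pos hj']
        set ti : {i // i ∈ T} := ⟨i, hmemT i hi⟩ with hti
        have m1 : y ≠ cf ti := (hcy ti).ne
        have m1' : cf ti ≠ y := m1.symm
        have m2 : x ≠ cf ti := (hcx ti).ne
        have m2' : cf ti ≠ x := m2.symm
        have m3 : cf ti ≠ a j := hca ti j
        have m3' : a j ≠ cf ti := m3.symm
        intro e he he'
        simp only [Walk.edges_cons, Walk.edges_nil, List.mem_cons, List.not_mem_nil,
          or_false, List.mem_singleton] at he he'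
        rcases he with rfl | rfl | rfl <;>
          (simp only [Sym2.eq_iff] at he'; tauto)
      · rw [dif_neg hi, dif_neg hj']
        set ti : {i // i ∈ T} := ⟨i, hmemT i hi⟩ with hti
        set tj : {i // i ∈ T} := ⟨j, hmemT j hj'⟩ with htj
        have m1 : y ≠ cf ti := (hcy ti).ne
        have m1' : cf ti ≠ y := m1.symm
        have m2 : x ≠ cf ti := (hcx ti).ne
        have m2' : cf ti ≠ x := m2.symm
        have m3 : y ≠ cf tj := (hcy tj).ne
        have m3' : cf tj ≠ y := m3.symm
        have m4 : x ≠ cf tj := (hcx tj).ne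
        have m4' : cf tj ≠ x := m4.symm
        have m5 : cf ti ≠ a j := hca ti j
        have m5' : a j ≠ cf ti := m5.symm
        have m6 : cf tj ≠ a i := hca tj i
        have m6' : a i ≠ cf tj := m6.symm
        have m7 : cf ti ≠ cf tj := by
          intro h
          have := hcinj _ _ h
          rw [hti, htj, Subtype.mk.injEq] at this
          exact hij this
        have m7' : cf tj ≠ cf ti := m7.symm
        intro e he he'
        simp only [Walk.edges_cons, Walk.edges_nil, List.mem_cons, List.not_mem_nil,
          or_false, List.mem_singleton] at he he'
        rcases he with rfl | rfl | rfl <;>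
          (simp only [Sym2.eq_iff] at he'; tauto)


def auxP {V : Type*} (G : SimpleGraph V) {ℓ k : ℕ} (a : Fin ℓ → V) (b : Fin k → V) (z : V)
    (Q : ∀ (i : Fin ℓ) (j : Fin k), G.Walk (a i) (b j))
    (R : ∀ i : Fin ℓ, G.Walk z (a i)) (i : Fin ℓ) (j : Fin (k + 1)) :
    G.Walk
      (Sum.elim a (fun j : Fin (k + 1) =>
        if h : (j : ℕ) < k then b ⟨(j : ℕ), h⟩ else z) (Sum.inl i))
      (Sum.elim a (fun j : Fin (k + 1) =>
        if h : (j : ℕ) < k then b ⟨(j : ℕ), h⟩ else z) (Sum.inr j)) :=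
  if hlt : (j : ℕ) < k then (Q i ⟨(j : ℕ), hlt⟩).copy rfl (by simp [hlt])
  else ((R i).reverse).copy rfl (by simp [hlt])

lemma immersion_extend_core {V : Type*} (G : SimpleGraph V) {ℓ k : ℕ}
    (a : Fin ℓ → V) (b : Fin k → V) (z : V)
    (ha_inj : Function.Injective a) (hb_inj : Function.Injective b)
    (hab : ∀ i j, a i ≠ b j) (haz : ∀ i, a i ≠ z) (hbz : ∀ j, b j ≠ z)
    (Q : ∀ (i : Fin ℓ) (j : Fin k), G.Walk (a i) (b j))
    (hQpath : ∀ i j, (Q i j).IsPath)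
    (hQdis : ∀ i j i' j', ¬(i = i' ∧ j = j') →
      List.Disjoint (Q i j).edges (Q i' j').edges)
    (R : ∀ i : Fin ℓ, G.Walk z (a i))
    (hRpath : ∀ i, (R i).IsPath)
    (hRdis : ∀ i i', i ≠ i' → List.Disjoint (R i).edges (R i').edges)
    (hQR : ∀ i j i', List.Disjoint (Q i j).edges (R i').edges) :
    ∃ f : (Fin ℓ ⊕ Fin (k + 1)) → V, Function.Injective f ∧
    ∃ P : ∀ u v : (Fin ℓ ⊕ Fin (k + 1)),
        (completeBipartiteGraph (Fin ℓ) (Fin (k + 1))).Adj u v → G.Walk (f u) (f v),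
      (∀ u v (h : _), (P u v h).IsPath) ∧
      ∀ u v u' v' (h : _) (h' : _),
        s(u, v) ≠ s(u', v') → List.Disjoint (P u v h).edges (P u' v' h').edges := by
  classical
  have hll : ∀ (i i' : Fin ℓ),
      ¬ (completeBipartiteGraph (Fin ℓ) (Fin (k + 1))).Adj (Sum.inl i) (Sum.inl i') := by
    rintro i i' (⟨h1, h2⟩ | ⟨h1, h2⟩) <;> simp at *
  have hrr : ∀ (j j' : Fin (k + 1)),
      ¬ (completeBipartiteGraph (Fin ℓ) (Fin (k + 1))).Adj (Sum.inr j) (Sum.inr j') := by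
    rintro j j' (⟨h1, h2⟩ | ⟨h1, h2⟩) <;> simp at *
  have key : ∀ (i i' : Fin ℓ) (j j' : Fin (k + 1)), ¬(i = i' ∧ j = j') →
      List.Disjoint ((auxP G a b z Q R i j).edges) ((auxP G a b z Q R i' j').edges) := by
    intro i i' j j' hpair
    simp only [auxP]
    by_cases hlt : (j : ℕ) < k <;> by_cases hlt' : (j' : ℕ) < k
    · rw [dif_pos hlt, dif_pos hlt']
      erw [Walk.edges_copy, Walk.edges_copy]
      refine hQdis i ⟨(j : ℕ), hlt⟩ i' ⟨(j' : ℕ), hlt'⟩ ?_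
      rintro ⟨h1, h2⟩
      have hv : ((⟨(j : ℕ), hlt⟩ : Fin k) : ℕ) = ((⟨(j' : ℕ), hlt'⟩ : Fin k) : ℕ) :=
        congrArg Fin.val h2
      exact hpair ⟨h1, Fin.ext (by simpa using hv)⟩
    · rw [dif_pos hlt, dif_neg hlt']
      erw [Walk.edges_copy, Walk.edges_copy, Walk.edges_reverse]
      intro e he he'
      exact hQR i ⟨(j : ℕ), hlt⟩ i' he (List.mem_reverse.mp he')
    · rw [dif_neg hlt, dif_pos hlt']
      erw [Walk.edges_copy, Walk.edges_copy, Walk.edges_reverse]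
      intro e he he'
      exact hQR i' ⟨(j' : ℕ), hlt'⟩ i he' (List.mem_reverse.mp he)
    · rw [dif_neg hlt, dif_neg hlt']
      have hjj : j = j' := by
        have h1 := j.isLt
        have h2 := j'.isLt
        exact Fin.ext (by omega)
      have hii : i ≠ i' := fun h => hpair ⟨h, hjj⟩
      erw [Walk.edges_copy, Walk.edges_copy, Walk.edges_reverse, Walk.edges_reverse]
      intro e he he'
      exact hRdis i i' hii (List.mem_reverse.mp he) (List.mem_reverse.mp he')
  refine ⟨Sum.elim a (fun j : Fin (k + 1) =>
      if h : (j : ℕ) < k then b ⟨(j : ℕ), h⟩ else z), ?_,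
    fun u v h =>
      match u, v, h with
      | Sum.inl i, Sum.inr j, _ => auxP G a b z Q R i j
      | Sum.inr j, Sum.inl i, _ => (auxP G a b z Q R i j).reverse
      | Sum.inl i, Sum.inl i', h => absurd h (hll i i')
      | Sum.inr j, Sum.inr j', h => absurd h (hrr j j'), ?_, ?_⟩
  · -- injectivity
    intro u v huv
    rcases u with i | j <;> rcases v with i' | j' <;>
      simp only [Sum.elim_inl, Sum.elim_inr] at huv
    · rw [ha_inj huv]
    · by_cases hj : (j' : ℕ) < k
      · rw [dif_pos hj] at huv
        exact absurd huv (hab _ _)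
      · rw [dif_neg hj] at huv
        exact absurd huv (haz _)
    · by_cases hj : (j : ℕ) < k
      · rw [dif_pos hj] at huv
        exact absurd huv.symm (hab _ _)
      · rw [dif_neg hj] at huv
        exact absurd huv.symm (haz _)
    · by_cases hj : (j : ℕ) < k <;> by_cases hj' : (j' : ℕ) < k
      · rw [dif_pos hj, dif_pos hj'] at huv
        have h2 := hb_inj huv
        have hv : (j : ℕ) = (j' : ℕ) := by simpa using congrArg Fin.val h2
        exact congrArg Sum.inr (Fin.ext hv)
      · rw [dif_pos hj, dif_neg hj'] at huv
        exact absurd huv (hbz _)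
      · rw [dif_neg hj, dif_pos hj'] at huv
        exact absurd huv.symm (hbz _)
      · have h1 := j.isLt
        have h2 := j'.isLt
        exact congrArg Sum.inr (Fin.ext (by omega))
  · -- paths
    intro u v h
    beta_reduce
    split
    · rename_i i j hadj
      simp only [auxP]
      by_cases hlt : (j : ℕ) < k
      · rw [dif_pos hlt]
        erw [Walk.isPath_copy]
        exact hQpath _ _
      · rw [dif_neg hlt]
        erw [Walk.isPath_copy]
        exact (hRpath _).reverse
    · rename_i j i hadj
      apply Walk.IsPath.reverse
      simp only [auxP]
      by_cases hlt : (j : ℕ) < k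
      · rw [dif_pos hlt]
        erw [Walk.isPath_copy]
        exact hQpath _ _
      · rw [dif_neg hlt]
        erw [Walk.isPath_copy]
        exact (hRpath _).reverse
    · exact absurd ‹_› (hll _ _)
    · exact absurd ‹_› (hrr _ _)
  · -- disjointness
    intro u v u' v' h h' hne
    beta_reduce
    split <;> split
    all_goals try exact ((hll _ _) ‹_›).elim
    all_goals try exact ((hrr _ _) ‹_›).elim
    · exact key _ _ _ _ (by rintro ⟨rfl, rfl⟩; exact hne rfl)
    · intro e he he'
      rw [Walk.edges_reverse, List.mem_reverse] at he'
      exact key _ _ _ _ (by rintro ⟨rfl, rfl⟩; exact hne Sym2.eq_swap) he he'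
    · intro e he he'
      rw [Walk.edges_reverse, List.mem_reverse] at he
      exact key _ _ _ _ (by rintro ⟨rfl, rfl⟩; exact hne Sym2.eq_swap) he he'
    · intro e he he'
      rw [Walk.edges_reverse, List.mem_reverse] at he
      rw [Walk.edges_reverse, List.mem_reverse] at he'
      exact key _ _ _ _ (by rintro ⟨rfl, rfl⟩; exact hne rfl) he he'

/-- Induction step: if `G` is an `n`-vertex graph with independence number at most 2,
`1 ≤ ℓ ≤ ⌈n/2⌉ - 1`, and `x, y` are non-adjacent vertices with at least `ℓ - 1` common
neighbors such that `G - x - y` contains an immersion of `K_{ℓ, ⌈n/2⌉ - 1 - ℓ}`, then `G`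
contains an immersion of `K_{ℓ, ⌈n/2⌉ - ℓ}`. -/
theorem statement_13 {V : Type*} [Fintype V] [DecidableEq V] (G : SimpleGraph V) (n ℓ : ℕ)
    (hn : Fintype.card V = n)
    (hα : Gᶜ.CliqueFree 3)
    (hℓ1 : 1 ≤ ℓ) (hℓ2 : ℓ ≤ (n + 1) / 2 - 1)
    (x y : V) (hxy : x ≠ y) (hnadj : ¬ G.Adj x y)
    (hcommon : ℓ - 1 ≤ (G.neighborSet x ∩ G.neighborSet y).ncard)
    (himm : Immersion (G.induce ({x, y}ᶜ : Set V))
      (completeBipartiteGraph (Fin ℓ) (Fin ((n + 1) / 2 - 1 - ℓ)))) :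
    Immersion G (completeBipartiteGraph (Fin ℓ) (Fin ((n + 1) / 2 - ℓ))) := by
  classical
  have hk : (n + 1) / 2 - ℓ = ((n + 1) / 2 - 1 - ℓ) + 1 := by omega
  rw [hk]
  set k : ℕ := (n + 1) / 2 - 1 - ℓ with hkdef
  obtain ⟨f₀, hf₀inj, P₀, hP₀path, hP₀dis⟩ := himm
  have hfS : ∀ u : Fin ℓ ⊕ Fin k, (f₀ u : V) ≠ x ∧ (f₀ u : V) ≠ y := by
    intro u
    have h2 := (f₀ u).2
    simp only [Set.mem_compl_iff, Set.mem_insert_iff, Set.mem_singleton_iff] at h2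
    push_neg at h2
    exact h2
  have ha_inj : Function.Injective (fun i : Fin ℓ => (f₀ (Sum.inl i) : V)) := by
    intro i i' h
    exact Sum.inl_injective (hf₀inj (Subtype.ext h))
  have hb_inj : Function.Injective (fun j : Fin k => (f₀ (Sum.inr j) : V)) := by
    intro j j' h
    exact Sum.inr_injective (hf₀inj (Subtype.ext h))
  have hab : ∀ (i : Fin ℓ) (j : Fin k), (f₀ (Sum.inl i) : V) ≠ (f₀ (Sum.inr j) : V) := by
    intro i j h
    exact Sum.inl_ne_inr (hf₀inj (Subtype.ext h))
  obtain ⟨z, hz, R, hRpath, hRstar, hRdis⟩ :=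
    star_paths G hα x y hxy hnadj hcommon (fun i => (f₀ (Sum.inl i) : V)) ha_inj
      (fun i => (hfS _).1) (fun i => (hfS _).2)
  have haz : ∀ i : Fin ℓ, (f₀ (Sum.inl i) : V) ≠ z := by
    intro i
    rcases hz with rfl | rfl
    · exact (hfS _).1
    · exact (hfS _).2
  have hbz : ∀ j : Fin k, (f₀ (Sum.inr j) : V) ≠ z := by
    intro j
    rcases hz with rfl | rfl
    · exact (hfS _).1
    · exact (hfS _).2
  -- the mapped old paths
  have hembinj : Function.Injective
      ⇑(SimpleGraph.Embedding.induce (G := G) ({x, y}ᶜ : Set V)).toHom := by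
    intro p q h
    exact Subtype.val_injective h
  have hadj0 : ∀ (i : Fin ℓ) (j : Fin k),
      (completeBipartiteGraph (Fin ℓ) (Fin k)).Adj (Sum.inl i) (Sum.inr j) :=
    fun i j => Or.inl ⟨rfl, rfl⟩
  -- two-index versions of the old path facts
  have hQpath : ∀ (i : Fin ℓ) (j : Fin k),
      ((P₀ (Sum.inl i) (Sum.inr j) (hadj0 i j)).map
        (SimpleGraph.Embedding.induce (G := G) ({x, y}ᶜ : Set V)).toHom).IsPath :=
    fun i j => Walk.map_isPath_of_injective hembinj (hP₀path _ _ _)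
  have hQavoid : ∀ (i : Fin ℓ) (j : Fin k), ∀ e ∈
      ((P₀ (Sum.inl i) (Sum.inr j) (hadj0 i j)).map
        (SimpleGraph.Embedding.induce (G := G) ({x, y}ᶜ : Set V)).toHom).edges,
      x ∉ e ∧ y ∉ e := by
    intro i j e he
    rw [Walk.edges_map, List.mem_map] at he
    obtain ⟨e₀, he₀, rfl⟩ := he
    constructor <;> intro hx
    · obtain ⟨w, hw, hwv⟩ := Sym2.mem_map.mp hx
      have h2 : (w : V) ∈ ({x, y}ᶜ : Set V) := w.2
      have h3 : (w : V) = x := hwv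
      rw [h3] at h2
      simp at h2
    · obtain ⟨w, hw, hwv⟩ := Sym2.mem_map.mp hx
      have h2 : (w : V) ∈ ({x, y}ᶜ : Set V) := w.2
      have h3 : (w : V) = y := hwv
      rw [h3] at h2
      simp at h2
  have hQdis : ∀ (i : Fin ℓ) (j : Fin k) (i' : Fin ℓ) (j' : Fin k), ¬(i = i' ∧ j = j') →
      List.Disjoint
        ((P₀ (Sum.inl i) (Sum.inr j) (hadj0 i j)).map
          (SimpleGraph.Embedding.induce (G := G) ({x, y}ᶜ : Set V)).toHom).edges
        ((P₀ (Sum.inl i') (Sum.inr j') (hadj0 i' j')).map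
          (SimpleGraph.Embedding.induce (G := G) ({x, y}ᶜ : Set V)).toHom).edges := by
    intro i j i' j' hpair e he he'
    rw [Walk.edges_map, List.mem_map] at he he'
    obtain ⟨e₀, he₀, rfl⟩ := he
    obtain ⟨e₁, he₁, heq⟩ := he'
    have he01 : e₁ = e₀ := Sym2.map.injective hembinj heq
    have hne : s(Sum.inl i, (Sum.inr j : Fin ℓ ⊕ Fin k)) ≠ s(Sum.inl i', Sum.inr j') := by
      intro hs
      rcases Sym2.eq_iff.mp hs with ⟨h1, h2⟩ | ⟨h1, h2⟩
      · exact hpair ⟨Sum.inl_injective h1, Sum.inr_injective h2⟩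
      · exact Sum.inl_ne_inr h1
    exact hP₀dis _ _ _ _ _ _ hne he₀ (he01 ▸ he₁)
  -- disjointness between old paths and new star paths
  have hQR : ∀ (i : Fin ℓ) (j : Fin k) (i' : Fin ℓ),
      List.Disjoint
        ((P₀ (Sum.inl i) (Sum.inr j) (hadj0 i j)).map
          (SimpleGraph.Embedding.induce (G := G) ({x, y}ᶜ : Set V)).toHom).edges
        (R i').edges := by
    intro i j i' e he he'
    have h1 := hQavoid i j e he
    have h2 := hRstar i' e he'
    tauto
  obtain ⟨f, hfinj, P, hPpath, hPdis⟩ :=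
    immersion_extend_core G (fun i => (f₀ (Sum.inl i) : V)) (fun j => (f₀ (Sum.inr j) : V)) z
      ha_inj hb_inj hab haz hbz
      (fun i j => (P₀ (Sum.inl i) (Sum.inr j) (hadj0 i j)).map
        (SimpleGraph.Embedding.induce (G := G) ({x, y}ᶜ : Set V)).toHom)
      hQpath hQdis R hRpath hRdis hQR
  exact ⟨f, hfinj, P, hPpath, hPdis⟩
end
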